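/- arXiv:2603.05100 — 3 statements merged into one kernel-verified Lean document; each statement's English description precedes it below -/
import Mathlib

section
/- For every real number t > 1, there is no minimally t-tough chordal graph with a universal vertex. -/
open SimpleGraph
open scoped ENNReal NNReal

/-- The number of connected components of a graph. -/
noncomputable def componentCount {V : Type*} (G : SimpleGraph V) : ℕ :=
  Nat.card G.ConnectedComponent

/-- `S` is a separator of `G` if `G - S` has at least two connected components. -/
def SimpleGraph.IsSeparator {V : Type*} (G : SimpleGraph V) (S : Finset V) : Prop :=
  2 ≤ componentCount (G.induce ((↑S : Set V)ᶜ))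

/-- The toughness of a graph, as an extended nonnegative real:
the infimum over all separators `S` of `|S| / c(G - S)`; `∞` if there is no separator. -/
noncomputable def SimpleGraph.toughness {V : Type*} (G : SimpleGraph V) : ℝ≥0∞ :=
  ⨅ (S : Finset V) (_ : G.IsSeparator S),
    (S.card : ℝ≥0∞) / (componentCount (G.induce ((↑S : Set V)ᶜ)) : ℝ≥0∞)

/-- A graph is minimally tough if deleting any edge strictly decreases the toughness. -/
def SimpleGraph.MinimallyTough {V : Type*} (G : SimpleGraph V) : Prop :=
  ∀ e ∈ G.edgeSet, (G.deleteEdges {e}).toughness < G.toughness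

/-- The degree of a vertex (as the cardinality of its neighbourhood). -/
noncomputable def SimpleGraph.deg {V : Type*} (G : SimpleGraph V) (v : V) : ℕ :=
  (G.neighborSet v).ncard

/-- A graph is `d`-regular if every vertex has degree `d`. -/
def SimpleGraph.RegularOfDegree {V : Type*} (G : SimpleGraph V) (d : ℕ) : Prop :=
  ∀ v, G.deg v = d

/-- Two `u`-`v` walks are internally disjoint if `u` and `v` are their only common vertices. -/
def SimpleGraph.InternallyDisjoint {V : Type*} {G : SimpleGraph V} {u v : V}
    (p q : G.Walk u v) : Prop :=
  ∀ w, w ∈ p.support → w ∈ q.support → w = u ∨ w = v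

/-- The local connectivity `κ_G(u,v)`: the maximum number of pairwise internally
vertex-disjoint `u`-`v` paths in `G`. -/
noncomputable def SimpleGraph.localConnectivity {V : Type*} (G : SimpleGraph V) (u v : V) : ℕ :=
  sSup {n | ∃ P : Set (G.Path u v), P.ncard = n ∧
    P.Pairwise fun p q => SimpleGraph.InternallyDisjoint (p : G.Walk u v) (q : G.Walk u v)}

/-- A graph is `k`-connected if it has more than `k` vertices and removing fewer than `k`
vertices leaves it connected. -/
def SimpleGraph.IsKConnected {V : Type*} (G : SimpleGraph V) (k : ℕ) : Prop :=
  k < Nat.card V ∧ ∀ S : Finset V, S.card < k → (G.induce ((↑S : Set V)ᶜ)).Connected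

/-- The connectivity `κ(G)` of a graph: the largest `k` such that `G` is `k`-connected. -/
noncomputable def SimpleGraph.connectivity {V : Type*} (G : SimpleGraph V) : ℕ :=
  sSup {k | G.IsKConnected k}

/-- The maximum size of a matching in `G`. -/
noncomputable def SimpleGraph.maxMatching {V : Type*} (G : SimpleGraph V) : ℕ :=
  sSup {n | ∃ M : G.Subgraph, M.IsMatching ∧ M.edgeSet.ncard = n}

/-- A walk has a chord if some edge of `G` joins two of its vertices but is not an
edge of the walk. -/
def SimpleGraph.Walk.HasChord {V : Type*} {G : SimpleGraph V} {v : V} (c : G.Walk v v) : Prop :=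
  ∃ x y, x ∈ c.support ∧ y ∈ c.support ∧ G.Adj x y ∧ s(x, y) ∉ c.edges

/-- A graph is chordal if every cycle of length at least 4 has a chord. -/
def SimpleGraph.IsChordal {V : Type*} (G : SimpleGraph V) : Prop :=
  ∀ (v : V) (c : G.Walk v v), c.IsCycle → 4 ≤ c.length → c.HasChord

/-- A vertex is universal if it is adjacent to all other vertices. -/
def SimpleGraph.IsUniversalVertex {V : Type*} (G : SimpleGraph V) (v : V) : Prop :=
  ∀ w, w ≠ v → G.Adj v w

section Helpers

variable {V : Type*}

/-- reachability in induced graph iff there is a walk with support in s -/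
lemma reachable_induce_iff (G : SimpleGraph V) {s : Set V} {x y : V} (hx : x ∈ s) (hy : y ∈ s) :
    (G.induce s).Reachable ⟨x, hx⟩ ⟨y, hy⟩ ↔ ∃ p : G.Walk x y, ∀ z ∈ p.support, z ∈ s := by
  constructor
  · rintro ⟨p⟩
    -- map the walk down
    have key : ∀ (a b : s) (q : (G.induce s).Walk a b),
        ∃ p : G.Walk a.1 b.1, ∀ z ∈ p.support, z ∈ s := by
      intro a b q
      induction q with
      | nil => exact ⟨SimpleGraph.Walk.nil, by simp [Subtype.coe_prop]⟩
      | @cons c d e h q ih =>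
        obtain ⟨p, hp⟩ := ih
        refine ⟨SimpleGraph.Walk.cons h p, ?_⟩
        intro z hz
        change z ∈ c.1 :: p.support at hz
        rcases List.mem_cons.mp hz with h1 | h2
        · exact h1 ▸ c.2
        · exact hp z h2
    exact key _ _ p
  · rintro ⟨p, hp⟩
    have key : ∀ (a b : V) (p : G.Walk a b) (hp : ∀ z ∈ p.support, z ∈ s)
        (ha : a ∈ s) (hb : b ∈ s), (G.induce s).Reachable ⟨a, ha⟩ ⟨b, hb⟩ := by
      intro a b p
      induction p with
      | nil => intro _ ha hb; rfl
      | @cons a c b h p ih =>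
        intro hp ha hb
        have hc : c ∈ s := hp c (by simp)
        have h1 : (G.induce s).Adj ⟨a, ha⟩ ⟨c, hc⟩ := h
        exact (h1.reachable).trans (ih (fun z hz => hp z (by simp [hz])) hc hb)
    exact key x y p hp hx hy

set_option linter.unusedSectionVars false

variable [Fintype V]

lemma two_le_componentCount {α : Type*} [Finite α] (H : SimpleGraph α) {x y : α}
    (h : ¬ H.Reachable x y) : 2 ≤ componentCount H := by
  have hne : H.connectedComponentMk x ≠ H.connectedComponentMk y := by
    intro he; exact h (SimpleGraph.ConnectedComponent.eq.mp he)
  have : Nontrivial H.ConnectedComponent := ⟨_, _, hne⟩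
  exact Finite.one_lt_card

lemma componentCount_le_one {α : Type*} (H : SimpleGraph α) (h : ∀ x y : α, H.Reachable x y) :
    componentCount H ≤ 1 := by
  have : Subsingleton H.ConnectedComponent := by
    constructor
    intro c d
    obtain ⟨a, rfl⟩ := c.exists_rep
    obtain ⟨b, rfl⟩ := d.exists_rep
    exact SimpleGraph.ConnectedComponent.eq.mpr (h a b)
  exact Finite.card_le_one_iff_subsingleton.mpr this

lemma exists_unreachable_of_two_le {α : Type*} [Finite α] (H : SimpleGraph α)
    (h : 2 ≤ componentCount H) : ∃ x y : α, ¬ H.Reachable x y := by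
  by_contra hc
  push_neg at hc
  have := componentCount_le_one H hc
  omega

lemma componentCount_le_card {α : Type*} [Finite α] (H : SimpleGraph α) :
    componentCount H ≤ Nat.card α :=
  Nat.card_le_card_of_surjective H.connectedComponentMk
    (fun c => c.exists_rep)

lemma componentCount_le_two {α : Type*} [Finite α] (H : SimpleGraph α) (z1 z2 : α)
    (h : ∀ x : α, H.Reachable x z1 ∨ H.Reachable x z2) : componentCount H ≤ 2 := by
  have hs : Function.Surjective (fun b : Bool => if b then H.connectedComponentMk z1
      else H.connectedComponentMk z2) := by
    intro c
    obtain ⟨a, rfl⟩ := c.exists_rep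
    rcases h a with h1 | h1
    · exact ⟨true, by simp only [if_true]; exact (SimpleGraph.ConnectedComponent.eq.mpr h1).symm⟩
    · exact ⟨false, by simp only [if_false, Bool.false_eq_true]; exact (SimpleGraph.ConnectedComponent.eq.mpr h1).symm⟩
  calc componentCount H ≤ Nat.card Bool := Nat.card_le_card_of_surjective _ hs
    _ = 2 := by simp [Nat.card_eq_fintype_card]

lemma toughness_le_ratio (G : SimpleGraph V) {S : Finset V} (hS : G.IsSeparator S) :
    G.toughness ≤ (S.card : ℝ≥0∞) / (componentCount (G.induce ((↑S : Set V)ᶜ)) : ℝ≥0∞) := by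
  exact iInf₂_le S hS

lemma exists_sep_of_toughness_lt (G : SimpleGraph V) {b : ℝ≥0∞} (h : G.toughness < b) :
    ∃ S : Finset V, G.IsSeparator S ∧
      (S.card : ℝ≥0∞) / (componentCount (G.induce ((↑S : Set V)ᶜ)) : ℝ≥0∞) < b := by
  rw [SimpleGraph.toughness] at h
  rw [iInf_lt_iff] at h
  obtain ⟨S, hS⟩ := h
  rw [iInf_lt_iff] at hS
  obtain ⟨h1, h2⟩ := hS
  exact ⟨S, h1, h2⟩

lemma toughness_eq_top_of_no_sep (G : SimpleGraph V) (h : ∀ S : Finset V, ¬ G.IsSeparator S) :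
    G.toughness = ⊤ := by
  rw [SimpleGraph.toughness]
  simp only [iInf_eq_top]
  intro S hS
  exact absurd hS (h S)

end Helpers


section Part2
set_option linter.unusedSectionVars false
variable {V : Type*}

lemma mem_complS {S : Finset V} {x : V} : x ∈ ((↑S : Set V)ᶜ) ↔ x ∉ S := by simp

lemma no_walk_of_closed {G : SimpleGraph V} {s : Set V} {w y : V} (hne : w ≠ y)
    (hiso : ∀ z, G.Adj w z → z ∉ s) :
    ¬ ∃ p : G.Walk w y, ∀ z ∈ p.support, z ∈ s := by
  rintro ⟨p, hp⟩
  cases p with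
  | nil => exact hne rfl
  | cons h q => exact hiso _ h (hp _ (by simp))

variable [Fintype V]

/-- A separator from an unreachable pair. -/
lemma isSeparator_of_no_walk (G : SimpleGraph V) {S : Finset V} {x y : V}
    (hx : x ∉ S) (hy : y ∉ S) (hxy : x ≠ y)
    (hnowalk : ¬ ∃ p : G.Walk x y, ∀ z ∈ p.support, z ∉ S) : G.IsSeparator S := by
  have hx' : x ∈ ((↑S : Set V)ᶜ) := mem_complS.mpr hx
  have hy' : y ∈ ((↑S : Set V)ᶜ) := mem_complS.mpr hy
  apply two_le_componentCount (x := (⟨x, hx'⟩ : ((↑S : Set V)ᶜ : Set V)))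
    (y := (⟨y, hy'⟩ : ((↑S : Set V)ᶜ : Set V)))
  rw [reachable_induce_iff]
  intro ⟨p, hp⟩
  exact hnowalk ⟨p, fun z hz => mem_complS.mp (hp z hz)⟩

lemma two_t_le_card (G : SimpleGraph V) {t : ℝ≥0} (htough : G.toughness = (t : ℝ≥0∞))
    {S : Finset V} (hS : G.IsSeparator S) : (t : ℝ≥0∞) * 2 ≤ S.card := by
  have h1 : (t : ℝ≥0∞) ≤ (S.card : ℝ≥0∞) / (componentCount (G.induce ((↑S : Set V)ᶜ)) : ℝ≥0∞) :=
    htough ▸ toughness_le_ratio G hS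
  have h2 : (S.card : ℝ≥0∞) / (componentCount (G.induce ((↑S : Set V)ᶜ)) : ℝ≥0∞)
      ≤ (S.card : ℝ≥0∞) / 2 := by
    apply ENNReal.div_le_div le_rfl
    exact_mod_cast hS
  have h3 : (t : ℝ≥0∞) ≤ (S.card : ℝ≥0∞) / 2 := h1.trans h2
  rwa [ENNReal.le_div_iff_mul_le (Or.inl (by norm_num)) (Or.inl (by norm_num))] at h3

/-- Key analysis of deleting an edge `vw` at a universal vertex. -/
lemma key_bounds (G : SimpleGraph V) (t : ℝ≥0) (v : V) (hv : G.IsUniversalVertex v)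
    (htough : G.toughness = (t : ℝ≥0∞)) (hmin : G.MinimallyTough) (w : V) (hw : w ≠ v) :
    ∃ S : Finset V, v ∉ S ∧ w ∉ S ∧ (∀ z, G.Adj w z → z = v ∨ z ∈ S) ∧
      ((S.card : ℝ≥0∞) < t * 2) ∧ ((t : ℝ≥0∞) * 2 ≤ (S.card : ℝ≥0∞) + 1) := by
  classical
  have hadjvw : G.Adj v w := hv w hw
  have he : s(v, w) ∈ G.edgeSet := G.mem_edgeSet.mpr hadjvw
  have hlt : (G.deleteEdges {s(v, w)}).toughness < (t : ℝ≥0∞) := htough ▸ hmin _ he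
  obtain ⟨S, hsep, hratio⟩ := exists_sep_of_toughness_lt _ hlt
  set H := G.deleteEdges {s(v, w)} with hH
  -- (a) v ∉ S
  have hvS : v ∉ S := by
    intro hvS
    have hEq : H.induce ((↑S : Set V)ᶜ) = G.induce ((↑S : Set V)ᶜ) := by
      ext a b
      show H.Adj a.1 b.1 ↔ G.Adj a.1 b.1
      rw [hH, SimpleGraph.deleteEdges_adj]
      constructor
      · exact fun h => h.1
      · intro h
        refine ⟨h, ?_⟩
        simp only [Set.mem_singleton_iff, Sym2.eq_iff]
        rintro (⟨rfl, rfl⟩ | ⟨rfl, rfl⟩)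
        · exact mem_complS.mp a.2 hvS
        · exact mem_complS.mp b.2 hvS
    rw [SimpleGraph.IsSeparator, hEq] at hsep
    have h1 := htough ▸ toughness_le_ratio G hsep
    rw [hEq] at hratio
    exact absurd hratio (not_lt.mpr h1)
  have hvC : v ∈ ((↑S : Set V)ᶜ) := mem_complS.mpr hvS
  -- universal-type adjacency in H
  have hHadj_v : ∀ x : V, x ≠ v → x ≠ w → H.Adj v x := by
    intro x hxv hxw
    rw [hH, SimpleGraph.deleteEdges_adj]
    refine ⟨hv x hxv, ?_⟩
    intro hmem
    rw [Set.mem_singleton_iff, Sym2.eq_iff] at hmem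
    rcases hmem with ⟨h1, h2⟩ | ⟨h1, h2⟩
    · exact hxw h2
    · exact hxv h2
  -- (b) w ∉ S
  have hwS : w ∉ S := by
    intro hwS
    have : ∀ x y : ((↑S : Set V)ᶜ : Set V), (H.induce ((↑S : Set V)ᶜ)).Reachable x y := by
      have hr : ∀ x : ((↑S : Set V)ᶜ : Set V), (H.induce ((↑S : Set V)ᶜ)).Reachable x ⟨v, hvC⟩ := by
        intro x
        by_cases hxv : x.1 = v
        · rw [show x = (⟨v, hvC⟩ : ((↑S : Set V)ᶜ : Set V)) from Subtype.ext hxv]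
        · have hxw : x.1 ≠ w := fun h => mem_complS.mp x.2 (h ▸ hwS)
          have : (H.induce ((↑S : Set V)ᶜ)).Adj x ⟨v, hvC⟩ := (hHadj_v x.1 hxv hxw).symm
          exact this.reachable
      intro x y
      exact (hr x).trans (hr y).symm
    have := componentCount_le_one _ this
    rw [SimpleGraph.IsSeparator] at hsep
    omega
  have hwC : w ∈ ((↑S : Set V)ᶜ) := mem_complS.mpr hwS
  -- (c) neighbors of w are in S ∪ {v}
  have hnbr : ∀ z, G.Adj w z → z = v ∨ z ∈ S := by
    intro z hz
    by_contra hc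
    push_neg at hc
    obtain ⟨hzv, hzS⟩ := hc
    have hzC : z ∈ ((↑S : Set V)ᶜ) := mem_complS.mpr hzS
    have hzw : z ≠ w := fun h => G.irrefl (h ▸ hz)
    have hHwz : H.Adj w z := by
      rw [hH, SimpleGraph.deleteEdges_adj]
      refine ⟨hz, ?_⟩
      simp only [Set.mem_singleton_iff, Sym2.eq_iff]
      rintro (⟨h1, h2⟩ | ⟨h1, h2⟩)
      · exact hw h1
      · exact hzv h2
    have hHzv : H.Adj z v := (hHadj_v z hzv hzw).symm
    have : ∀ x : ((↑S : Set V)ᶜ : Set V), (H.induce ((↑S : Set V)ᶜ)).Reachable x ⟨v, hvC⟩ := by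
      intro x
      by_cases hxv : x.1 = v
      · rw [show x = (⟨v, hvC⟩ : ((↑S : Set V)ᶜ : Set V)) from Subtype.ext hxv]
      · by_cases hxw : x.1 = w
        · have h1 : (H.induce ((↑S : Set V)ᶜ)).Adj x ⟨z, hzC⟩ := by
            show H.Adj x.1 z; rw [hxw]; exact hHwz
          have h2 : (H.induce ((↑S : Set V)ᶜ)).Adj ⟨z, hzC⟩ ⟨v, hvC⟩ := hHzv
          exact h1.reachable.trans h2.reachable
        · have hh : (H.induce ((↑S : Set V)ᶜ)).Adj x ⟨v, hvC⟩ := (hHadj_v x.1 hxv hxw).symm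
          exact hh.reachable
    have hle := componentCount_le_one (H.induce ((↑S : Set V)ᶜ))
      (fun x y => (this x).trans (this y).symm)
    rw [SimpleGraph.IsSeparator] at hsep
    omega
  -- (d) exactly two components
  have hc2 : componentCount (H.induce ((↑S : Set V)ᶜ)) = 2 := by
    have hle : componentCount (H.induce ((↑S : Set V)ᶜ)) ≤ 2 := by
      apply componentCount_le_two _ (⟨v, hvC⟩ : ((↑S : Set V)ᶜ : Set V)) ⟨w, hwC⟩
      intro x
      by_cases hxw : x.1 = w
      · right; rw [show x = (⟨w, hwC⟩ : ((↑S : Set V)ᶜ : Set V)) from Subtype.ext hxw]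
      · by_cases hxv : x.1 = v
        · left; rw [show x = (⟨v, hvC⟩ : ((↑S : Set V)ᶜ : Set V)) from Subtype.ext hxv]
        · have hh : (H.induce ((↑S : Set V)ᶜ)).Adj x ⟨v, hvC⟩ := (hHadj_v x.1 hxv hxw).symm
          exact Or.inl hh.reachable
    rw [SimpleGraph.IsSeparator] at hsep
    omega
  -- (e) card bound
  have hSlt : (S.card : ℝ≥0∞) < (t : ℝ≥0∞) * 2 := by
    rw [hc2] at hratio
    rwa [ENNReal.div_lt_iff (Or.inl (by norm_num)) (Or.inl (by norm_num))] at hratio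
  -- (f) lower bound
  by_cases hrho : ∃ ρ, ρ ∉ S ∧ ρ ≠ v ∧ ρ ≠ w
  · obtain ⟨ρ, hρS, hρv, hρw⟩ := hrho
    have hsep' : G.IsSeparator (insert v S) := by
      apply isSeparator_of_no_walk G (x := w) (y := ρ)
      · simp [hwS, hw]
      · simp [hρS, hρv]
      · exact Ne.symm hρw
      · intro ⟨p, hp⟩
        refine no_walk_of_closed (G := G) (s := {z | z ∉ insert v S}) hρw.symm ?_ ⟨p, hp⟩
        intro z hz
        simp only [Set.mem_setOf_eq, not_not]
        rcases hnbr z hz with h | h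
        · simp [h]
        · simp [h]
    have hbound := two_t_le_card G htough hsep'
    rw [Finset.card_insert_of_notMem hvS] at hbound
    refine ⟨S, hvS, hwS, hnbr, hSlt, ?_⟩
    exact_mod_cast hbound
  · -- degenerate: V = S ∪ {v, w}
    push_neg at hrho
    exfalso
    have hsepex : ∃ T : Finset V, G.IsSeparator T := by
      by_contra hno
      push_neg at hno
      have := toughness_eq_top_of_no_sep G hno
      rw [htough] at this
      exact ENNReal.coe_ne_top this
    obtain ⟨T, hT⟩ := hsepex
    obtain ⟨x, y, hxy⟩ := exists_unreachable_of_two_le _ hT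
    have hxny : x ≠ y := fun h => hxy (h ▸ SimpleGraph.Reachable.refl _)
    -- x y : subtype of Tᶜ
    have hxT : x.1 ∉ T := mem_complS.mp x.2
    have hyT : y.1 ∉ T := mem_complS.mp y.2
    have hsub : T ∪ {x.1, y.1} ⊆ S ∪ {v, w} := by
      intro z hz
      by_cases h1 : z ∈ S
      · exact Finset.mem_union_left _ h1
      · rcases eq_or_ne z v with rfl | h2
        · exact Finset.mem_union_right _ (by simp)
        · rcases eq_or_ne z w with rfl | h3
          · exact Finset.mem_union_right _ (by simp)
          · exact absurd (hrho z h1) (by simp [h2, h3])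
    have hdisj : Disjoint T ({x.1, y.1} : Finset V) := by
      rw [Finset.disjoint_right]
      intro a ha
      simp only [Finset.mem_insert, Finset.mem_singleton] at ha
      rcases ha with rfl | rfl
      · exact fun h => hxT h
      · exact fun h => hyT h
    have hcard1 : T.card + 2 ≤ S.card + 2 := by
      have h1 : (T ∪ {x.1, y.1}).card = T.card + 2 := by
        rw [Finset.card_union_of_disjoint hdisj]
        congr 1
        rw [Finset.card_pair (fun h => hxny (Subtype.ext h))]
      have h2 : (S ∪ {v, w}).card ≤ S.card + 2 := by
        calc (S ∪ {v, w}).card ≤ S.card + ({v, w} : Finset V).card := Finset.card_union_le _ _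
          _ ≤ S.card + 2 := by
            have := Finset.card_insert_le v ({w} : Finset V)
            simp only [Finset.card_singleton] at this
            omega
      calc T.card + 2 = (T ∪ {x.1, y.1}).card := h1.symm
        _ ≤ (S ∪ {v, w}).card := Finset.card_le_card hsub
        _ ≤ S.card + 2 := h2
    have hTS : T.card ≤ S.card := by omega
    have h2t := two_t_le_card G htough hT
    have : (t : ℝ≥0∞) * 2 ≤ (S.card : ℝ≥0∞) := h2t.trans (by exact_mod_cast hTS)
    exact absurd hSlt (not_lt.mpr this)
end Part2

section Part3b
set_option linter.unusedSectionVars false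
variable {V : Type*} {G : SimpleGraph V}

lemma edges_of_length_one {a b : V} (p : G.Walk a b) (h : p.length = 1) :
    p.edges = [s(a, b)] := by
  cases p with
  | nil => simp at h
  | cons had q =>
    cases q with
    | nil => simp
    | cons h2 q2 => simp [SimpleGraph.Walk.length_cons] at h

lemma adj_of_length_one {a b : V} (p : G.Walk a b) (h : p.length = 1) : G.Adj a b :=
  p.adj_of_mem_edges (by rw [edges_of_length_one p h]; simp)

variable [DecidableEq V]

lemma takeUntil_cons {a c b x : V} (h : G.Adj a c) (q : G.Walk c b)
    (hx : x ∈ (SimpleGraph.Walk.cons h q).support) (hax : a ≠ x) (hx' : x ∈ q.support) :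
    (SimpleGraph.Walk.cons h q).takeUntil x hx
      = SimpleGraph.Walk.cons h (q.takeUntil x hx') := by
  rw [SimpleGraph.Walk.takeUntil]
  simp [hax]

lemma takeUntil_dichotomy {a b : V} (p : G.Walk a b) {x y : V}
    (hx : x ∈ p.support) (hy : y ∈ p.support) :
    x ∈ (p.takeUntil y hy).support ∨ y ∈ (p.takeUntil x hx).support := by
  induction p with
  | nil =>
    simp only [SimpleGraph.Walk.support_nil, List.mem_singleton] at hx hy
    subst hx; subst hy
    left; exact SimpleGraph.Walk.end_mem_support _
  | @cons a c b h q ih =>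
    by_cases hax : a = x
    · left; exact hax ▸ SimpleGraph.Walk.start_mem_support _
    · by_cases hay : a = y
      · right; exact hay ▸ SimpleGraph.Walk.start_mem_support _
      · have hx' : x ∈ q.support := by
          rcases List.mem_cons.mp (by simpa using hx) with h1 | h1
          · exact absurd h1.symm hax
          · exact h1
        have hy' : y ∈ q.support := by
          rcases List.mem_cons.mp (by simpa using hy) with h1 | h1
          · exact absurd h1.symm hay
          · exact h1
        rcases ih hx' hy' with h1 | h1
        · left
          rw [takeUntil_cons h q hy hay hy']
          simp [h1]
        · right
          rw [takeUntil_cons h q hx hax hx']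
          simp [h1]

/-- a minimal-length walk within `D` has no chords -/
lemma chord_aux {D : Set V} {x y x0 y0 : V} (P : G.Walk x y)
    (hPD : ∀ s ∈ P.support, s ∈ D)
    (hmin : ∀ q : G.Walk x y, (∀ s ∈ q.support, s ∈ D) → P.length ≤ q.length)
    (hadj : G.Adj x0 y0) (hnotE : s(x0, y0) ∉ P.edges)
    (hy0 : y0 ∈ P.support) (hx0 : x0 ∈ (P.takeUntil y0 hy0).support) : False := by
  set P1 := P.takeUntil y0 hy0 with hP1
  set P2 := P.dropUntil y0 hy0 with hP2
  set Q1 := P1.takeUntil x0 hx0 with hQ1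
  set R1 := P1.dropUntil x0 hx0 with hR1
  have hPsplit : P1.append P2 = P := SimpleGraph.Walk.take_spec P hy0
  have hP1split : Q1.append R1 = P1 := SimpleGraph.Walk.take_spec P1 hx0
  have hlenP : P.length = Q1.length + R1.length + P2.length := by
    rw [← hPsplit, ← hP1split]
    rw [SimpleGraph.Walk.length_append, SimpleGraph.Walk.length_append]
  set Q : G.Walk x y := (Q1.concat hadj).append P2 with hQ
  have hQlen : Q.length = Q1.length + 1 + P2.length := by
    rw [hQ, SimpleGraph.Walk.length_append, SimpleGraph.Walk.length_concat]
  have hQsupp : ∀ s ∈ Q.support, s ∈ D := by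
    intro s hs
    rw [hQ, SimpleGraph.Walk.support_append] at hs
    rcases List.mem_append.mp hs with h1 | h1
    · rw [SimpleGraph.Walk.support_concat] at h1
      rcases List.mem_append.mp h1 with h2 | h2
      · exact hPD s (SimpleGraph.Walk.support_takeUntil_subset _ _
          (SimpleGraph.Walk.support_takeUntil_subset _ _ h2))
      · rw [List.mem_singleton] at h2
        exact hPD s (h2 ▸ hy0)
    · exact hPD s (SimpleGraph.Walk.support_dropUntil_subset _ _ (List.mem_of_mem_tail h1))
  have hle := hmin Q hQsupp
  have hR1 : R1.length ≤ 1 := by omega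
  rcases Nat.le_one_iff_eq_zero_or_eq_one.mp hR1 with h0 | h1
  · exact G.irrefl ((SimpleGraph.Walk.eq_of_length_eq_zero h0) ▸ hadj)
  · have : s(x0, y0) ∈ R1.edges := by rw [edges_of_length_one R1 h1]; simp
    exact hnotE (SimpleGraph.Walk.edges_takeUntil_subset _ _
      (SimpleGraph.Walk.edges_dropUntil_subset _ _ this))

lemma no_chord_shortest {D : Set V} {x y x0 y0 : V} (P : G.Walk x y)
    (hPD : ∀ s ∈ P.support, s ∈ D)
    (hmin : ∀ q : G.Walk x y, (∀ s ∈ q.support, s ∈ D) → P.length ≤ q.length)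
    (hadj : G.Adj x0 y0) (hnotE : s(x0, y0) ∉ P.edges)
    (hx0 : x0 ∈ P.support) (hy0 : y0 ∈ P.support) : False := by
  rcases takeUntil_dichotomy P hx0 hy0 with h | h
  · exact chord_aux P hPD hmin hadj hnotE hy0 h
  · exact chord_aux P hPD hmin hadj.symm (by rwa [Sym2.eq_swap] at hnotE) hx0 h

lemma exists_shortest {D : Set V} {x y : V}
    (hex : ∃ p : G.Walk x y, ∀ s ∈ p.support, s ∈ D) :
    ∃ P : G.Walk x y, P.IsPath ∧ (∀ s ∈ P.support, s ∈ D) ∧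
      ∀ q : G.Walk x y, (∀ s ∈ q.support, s ∈ D) → P.length ≤ q.length := by
  classical
  have hne : ∃ n, ∃ p : G.Walk x y, p.length = n ∧ ∀ s ∈ p.support, s ∈ D := by
    obtain ⟨p, hp⟩ := hex
    exact ⟨p.length, p, rfl, hp⟩
  obtain ⟨p, hplen, hpD⟩ := Nat.find_spec hne
  refine ⟨p.bypass, SimpleGraph.Walk.bypass_isPath p, ?_, ?_⟩
  · exact fun s hs => hpD s (SimpleGraph.Walk.support_bypass_subset p hs)
  · intro q hq
    have h1 : Nat.find hne ≤ q.length := Nat.find_le ⟨q, rfl, hq⟩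
    have h2 : p.bypass.length ≤ p.length := SimpleGraph.Walk.length_bypass_le p
    omega

lemma extract_nbr {T : Finset V} {b e a : V} (p : G.Walk b e)
    (hp : ∀ s ∈ p.support, s ∉ T.erase a) (ha : a ∈ p.support) (hab : a ≠ b) :
    ∃ z, G.Adj a z ∧ ∃ q : G.Walk b z, ∀ s ∈ q.support, s ∉ T := by
  set q := p.takeUntil a ha with hq
  have hcount : q.support.count a = 1 := SimpleGraph.Walk.count_support_takeUntil_eq_one p ha
  obtain ⟨z, hadj, q'', hq''⟩ := SimpleGraph.Walk.exists_eq_cons_of_ne hab q.reverse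
  have hsupp : q.reverse.support = a :: q''.support := by
    rw [hq'', SimpleGraph.Walk.support_cons]
  have hnota : a ∉ q''.support := by
    have h1 : q.reverse.support.count a = 1 := by
      rw [SimpleGraph.Walk.support_reverse, List.count_reverse]
      exact hcount
    rw [hsupp] at h1
    simp only [List.count_cons_self] at h1
    exact List.count_eq_zero.mp (by omega)
  refine ⟨z, hadj, q''.reverse, ?_⟩
  intro s hs
  rw [SimpleGraph.Walk.support_reverse, List.mem_reverse] at hs
  have hsa : s ≠ a := fun h => hnota (h ▸ hs)
  have hsp : s ∈ p.support := by
    apply SimpleGraph.Walk.support_takeUntil_subset p ha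
    have : s ∈ q.reverse.support := by rw [hsupp]; exact List.mem_cons_of_mem _ hs
    rwa [SimpleGraph.Walk.support_reverse, List.mem_reverse] at this
  intro hsT
  exact hp s hsp (Finset.mem_erase.mpr ⟨hsa, hsT⟩)

end Part3b

section Part4b
set_option linter.unusedSectionVars false
variable {V : Type*} [DecidableEq V]

lemma clique_of_minsep (G : SimpleGraph V) (hchordal : G.IsChordal)
    {u r : V} {T : Finset V} (hT : ∀ z, z ∈ T ↔ G.Adj u z)
    (hur : ¬ G.Adj u r) (hner : u ≠ r)
    (hminsep : ∀ a ∈ T, ∃ p : G.Walk u r, ∀ z ∈ p.support, z ∉ T.erase a)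
    {x y : V} (hx : x ∈ T) (hy : y ∈ T) (hxyne : x ≠ y) : G.Adj x y := by
  by_contra hxy
  have huT : u ∉ T := fun h => G.irrefl ((hT u).mp h)
  have hrT : r ∉ T := fun h => hur ((hT r).mp h)
  have hNoWalk : ¬ ∃ p : G.Walk u r, ∀ z ∈ p.support, z ∉ T := by
    rintro ⟨p, hp⟩
    cases p with
    | nil => exact hner rfl
    | @cons _ c _ h q =>
      have hc : c ∈ (SimpleGraph.Walk.cons h q).support := by
        rw [SimpleGraph.Walk.support_cons]
        exact List.mem_cons_of_mem _ q.start_mem_support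
      exact hp c hc ((hT c).mpr h)
  set Cu : Set V := {z | ∃ q : G.Walk u z, ∀ s ∈ q.support, s ∉ T} with hCu
  set Cr : Set V := {z | ∃ q : G.Walk r z, ∀ s ∈ q.support, s ∉ T} with hCr
  have hCuT : ∀ z ∈ Cu, z ∉ T := by rintro z ⟨q, hq⟩; exact hq z q.end_mem_support
  have hCrT : ∀ z ∈ Cr, z ∉ T := by rintro z ⟨q, hq⟩; exact hq z q.end_mem_support
  have hdisj : ∀ z, z ∈ Cu → z ∈ Cr → False := by
    rintro z ⟨q1, h1⟩ ⟨q2, h2⟩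
    refine hNoWalk ⟨q1.append q2.reverse, ?_⟩
    intro s hs
    rw [SimpleGraph.Walk.support_append] at hs
    rcases List.mem_append.mp hs with h3 | h3
    · exact h1 s h3
    · have := List.mem_of_mem_tail h3
      rw [SimpleGraph.Walk.support_reverse, List.mem_reverse] at this
      exact h2 s this
  have hnoedge : ∀ z w, z ∈ Cu → w ∈ Cr → ¬ G.Adj z w := by
    rintro z w ⟨q1, h1⟩ ⟨q2, h2⟩ hadj
    refine hNoWalk ⟨q1.append (SimpleGraph.Walk.cons hadj q2.reverse), ?_⟩
    intro s hs
    rw [SimpleGraph.Walk.support_append] at hs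
    rcases List.mem_append.mp hs with h3 | h3
    · exact h1 s h3
    · rw [SimpleGraph.Walk.support_cons, List.tail_cons] at h3
      have : s ∈ q2.support := by
        rwa [SimpleGraph.Walk.support_reverse, List.mem_reverse] at h3
      exact h2 s this
  have hclosu : ∀ {z : V} (q : G.Walk u z), (∀ s ∈ q.support, s ∉ T) →
      ∀ s ∈ q.support, s ∈ Cu := by
    intro z q hq s hs
    exact ⟨q.takeUntil s hs, fun z' hz' => hq z' (SimpleGraph.Walk.support_takeUntil_subset _ _ hz')⟩
  have hclosr : ∀ {z : V} (q : G.Walk r z), (∀ s ∈ q.support, s ∉ T) →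
      ∀ s ∈ q.support, s ∈ Cr := by
    intro z q hq s hs
    exact ⟨q.takeUntil s hs, fun z' hz' => hq z' (SimpleGraph.Walk.support_takeUntil_subset _ _ hz')⟩
  have hget : ∀ a ∈ T, (∃ z, G.Adj a z ∧ z ∈ Cu) ∧ (∃ w, G.Adj a w ∧ w ∈ Cr) := by
    intro a haT
    obtain ⟨p, hp⟩ := hminsep a haT
    have hap : a ∈ p.support := by
      by_contra hnp
      exact hNoWalk ⟨p, fun s hs hsT => hp s hs
        (Finset.mem_erase.mpr ⟨fun h => hnp (h ▸ hs), hsT⟩)⟩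
    have hau : a ≠ u := fun h => huT (h ▸ haT)
    have har : a ≠ r := fun h => hrT (h ▸ haT)
    constructor
    · obtain ⟨z, hadj, q, hq⟩ := extract_nbr p hp hap hau
      exact ⟨z, hadj, ⟨q, hq⟩⟩
    · obtain ⟨z, hadj, q, hq⟩ := extract_nbr p.reverse
        (by intro s hs; rw [SimpleGraph.Walk.support_reverse, List.mem_reverse] at hs
            exact hp s hs)
        (by rw [SimpleGraph.Walk.support_reverse, List.mem_reverse]; exact hap) har
      exact ⟨z, hadj, ⟨q, hq⟩⟩
  obtain ⟨⟨zx, hazx, hzxCu⟩, ⟨wx, hawx, hwxCr⟩⟩ := hget x hx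
  obtain ⟨⟨zy, hazy, hzyCu⟩, ⟨wy, hawy, hwyCr⟩⟩ := hget y hy
  set Du : Set V := Cu ∪ {x, y} with hDu
  set Dr : Set V := Cr ∪ {x, y} with hDr
  have hexu : ∃ p : G.Walk x y, ∀ s ∈ p.support, s ∈ Du := by
    obtain ⟨q1, h1⟩ := hzxCu
    obtain ⟨q2, h2⟩ := hzyCu
    refine ⟨SimpleGraph.Walk.cons hazx ((q1.reverse.append q2).concat hazy.symm), ?_⟩
    intro s hs
    rw [SimpleGraph.Walk.support_cons] at hs
    rcases List.mem_cons.mp hs with rfl | hs'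
    · exact Or.inr (by simp)
    · rw [SimpleGraph.Walk.support_concat] at hs'
      rcases List.mem_append.mp hs' with h3 | h3
      · rw [SimpleGraph.Walk.support_append] at h3
        rcases List.mem_append.mp h3 with h4 | h4
        · rw [SimpleGraph.Walk.support_reverse, List.mem_reverse] at h4
          exact Or.inl (hclosu q1 h1 s h4)
        · exact Or.inl (hclosu q2 h2 s (List.mem_of_mem_tail h4))
      · rw [List.mem_singleton] at h3
        exact Or.inr (by simp [h3])
  have hexr : ∃ p : G.Walk x y, ∀ s ∈ p.support, s ∈ Dr := by
    obtain ⟨q1, h1⟩ := hwxCr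
    obtain ⟨q2, h2⟩ := hwyCr
    refine ⟨SimpleGraph.Walk.cons hawx ((q1.reverse.append q2).concat hawy.symm), ?_⟩
    intro s hs
    rw [SimpleGraph.Walk.support_cons] at hs
    rcases List.mem_cons.mp hs with rfl | hs'
    · exact Or.inr (by simp)
    · rw [SimpleGraph.Walk.support_concat] at hs'
      rcases List.mem_append.mp hs' with h3 | h3
      · rw [SimpleGraph.Walk.support_append] at h3
        rcases List.mem_append.mp h3 with h4 | h4
        · rw [SimpleGraph.Walk.support_reverse, List.mem_reverse] at h4
          exact Or.inl (hclosr q1 h1 s h4)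
        · exact Or.inl (hclosr q2 h2 s (List.mem_of_mem_tail h4))
      · rw [List.mem_singleton] at h3
        exact Or.inr (by simp [h3])
  obtain ⟨P1, hP1path, hP1D, hP1min⟩ := exists_shortest hexu
  obtain ⟨P2, hP2path, hP2D, hP2min⟩ := exists_shortest hexr
  have hxCu : x ∉ Cu := fun h => hCuT x h hx
  have hyCu : y ∉ Cu := fun h => hCuT y h hy
  have hxCr : x ∉ Cr := fun h => hCrT x h hx
  have hyCr : y ∉ Cr := fun h => hCrT y h hy
  have hmem1 : ∀ s ∈ P1.support, s ∈ Cu ∨ s = x ∨ s = y := by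
    intro s hs
    rcases hP1D s hs with h | h
    · exact Or.inl h
    · right; simpa using h
  have hmem2 : ∀ s ∈ P2.support, s ∈ Cr ∨ s = x ∨ s = y := by
    intro s hs
    rcases hP2D s hs with h | h
    · exact Or.inl h
    · right; simpa using h
  have hA12 : ∀ s, s ∈ P1.support → s ∈ P2.support → s = x ∨ s = y := by
    intro s h1 h2
    rcases hmem1 s h1 with hc1 | hm
    · rcases hmem2 s h2 with hc2 | hm2
      · exact (hdisj s hc1 hc2).elim
      · exact hm2
    · exact hm
  have hlen1 : 2 ≤ P1.length := by
    have h0 : P1.length ≠ 0 := fun h => hxyne (SimpleGraph.Walk.eq_of_length_eq_zero h)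
    have h1 : P1.length ≠ 1 := fun h => hxy (adj_of_length_one P1 h)
    omega
  have hlen2 : 2 ≤ P2.length := by
    have h0 : P2.length ≠ 0 := fun h => hxyne (SimpleGraph.Walk.eq_of_length_eq_zero h)
    have h1 : P2.length ≠ 1 := fun h => hxy (adj_of_length_one P2 h)
    omega
  set c : G.Walk x x := P1.append P2.reverse with hc
  have hclen : c.length = P1.length + P2.length := by
    rw [hc, SimpleGraph.Walk.length_append, SimpleGraph.Walk.length_reverse]
  have hsupc : c.support = P1.support ++ P2.reverse.support.tail :=
    SimpleGraph.Walk.support_append _ _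
  have hedge_disj : ∀ e, e ∈ P1.edges → e ∈ P2.edges → False := by
    intro e
    induction e with
    | _ a b =>
      intro he1 he2
      have ha1 : a ∈ P1.support := P1.fst_mem_support_of_mem_edges he1
      have hb1 : b ∈ P1.support := P1.snd_mem_support_of_mem_edges he1
      have ha2 : a ∈ P2.support := P2.fst_mem_support_of_mem_edges he2
      have hb2 : b ∈ P2.support := P2.snd_mem_support_of_mem_edges he2
      have hadj : G.Adj a b := P1.adj_of_mem_edges he1
      rcases hA12 a ha1 ha2 with rfl | rfl <;> rcases hA12 b hb1 hb2 with rfl | rfl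
      · exact G.irrefl hadj
      · exact hxy hadj
      · exact hxy hadj.symm
      · exact G.irrefl hadj
  have htrail : c.IsTrail := by
    constructor
    rw [hc, SimpleGraph.Walk.edges_append, List.nodup_append]
    refine ⟨SimpleGraph.Walk.edges_nodup_of_support_nodup hP1path.support_nodup,
      SimpleGraph.Walk.edges_nodup_of_support_nodup hP2path.reverse.support_nodup, ?_⟩
    intro e he1 f he2 hef
    subst hef
    rw [SimpleGraph.Walk.edges_reverse, List.mem_reverse] at he2
    exact hedge_disj e he1 he2
  have hnenil : c ≠ SimpleGraph.Walk.nil := by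
    intro h
    have h0 : c.length = 0 := by rw [h]; rfl
    omega
  have hx_notin_tail1 : x ∉ P1.support.tail := by
    have := hP1path.support_nodup
    rw [SimpleGraph.Walk.support_eq_cons P1] at this
    exact (List.nodup_cons.mp this).1
  have hy_notin_tail2 : y ∉ P2.reverse.support.tail := by
    have := hP2path.reverse.support_nodup
    rw [SimpleGraph.Walk.support_eq_cons P2.reverse] at this
    exact (List.nodup_cons.mp this).1
  have htailnd : c.support.tail.Nodup := by
    have heq : c.support.tail = P1.support.tail ++ P2.reverse.support.tail := by
      rw [hsupc, SimpleGraph.Walk.support_eq_cons P1]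
      rfl
    rw [heq, List.nodup_append]
    refine ⟨hP1path.support_nodup.sublist (List.tail_sublist _),
      hP2path.reverse.support_nodup.sublist (List.tail_sublist _), ?_⟩
    intro s hs1 s' hs2 hss
    subst hss
    have hs1' : s ∈ P1.support := List.mem_of_mem_tail hs1
    have hs2' : s ∈ P2.support := by
      have := List.mem_of_mem_tail hs2
      rwa [SimpleGraph.Walk.support_reverse, List.mem_reverse] at this
    have hsx : s ≠ x := fun h => hx_notin_tail1 (h ▸ hs1)
    have hsy : s ≠ y := fun h => hy_notin_tail2 (h ▸ hs2)
    rcases hA12 s hs1' hs2' with h | h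
    · exact hsx h
    · exact hsy h
  have hcyc : c.IsCycle := ⟨⟨htrail, hnenil⟩, htailnd⟩
  have h4 : 4 ≤ c.length := by omega
  obtain ⟨x0, y0, hx0c, hy0c, hadj0, hne0⟩ := hchordal x c hcyc h4
  have hmemc : ∀ s ∈ c.support, s ∈ P1.support ∨ s ∈ P2.support := by
    intro s hs
    rw [hsupc] at hs
    rcases List.mem_append.mp hs with h | h
    · exact Or.inl h
    · right
      have := List.mem_of_mem_tail h
      rwa [SimpleGraph.Walk.support_reverse, List.mem_reverse] at this
  have hnotE1 : s(x0, y0) ∉ P1.edges := by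
    intro h
    exact hne0 (by rw [hc, SimpleGraph.Walk.edges_append]; exact List.mem_append_left _ h)
  have hnotE2 : s(x0, y0) ∉ P2.edges := by
    intro h
    refine hne0 ?_
    rw [hc, SimpleGraph.Walk.edges_append]
    refine List.mem_append_right _ ?_
    rw [SimpleGraph.Walk.edges_reverse, List.mem_reverse]
    exact h
  have hxP2 : x ∈ P2.support := P2.start_mem_support
  have hyP2 : y ∈ P2.support := P2.end_mem_support
  have hxP1 : x ∈ P1.support := P1.start_mem_support
  have hyP1 : y ∈ P1.support := P1.end_mem_support
  have cross : ∀ a0 b0, G.Adj a0 b0 → a0 ∈ P1.support → a0 ∉ P2.support →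
      b0 ∈ P2.support → b0 ∉ P1.support → False := by
    intro a0 b0 hadj ha1 ha2 hb2 hb1
    have ha0Cu : a0 ∈ Cu := by
      rcases hmem1 a0 ha1 with h | h | h
      · exact h
      · exact absurd (h ▸ hxP2) ha2
      · exact absurd (h ▸ hyP2) ha2
    have hb0Cr : b0 ∈ Cr := by
      rcases hmem2 b0 hb2 with h | h | h
      · exact h
      · exact absurd (h ▸ hxP1) hb1
      · exact absurd (h ▸ hyP1) hb1
    exact hnoedge _ _ ha0Cu hb0Cr hadj
  rcases hmemc x0 hx0c with h1 | h1 <;> rcases hmemc y0 hy0c with h2 | h2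
  · exact no_chord_shortest P1 hP1D hP1min hadj0 hnotE1 h1 h2
  · by_cases hx0P2 : x0 ∈ P2.support
    · exact no_chord_shortest P2 hP2D hP2min hadj0 hnotE2 hx0P2 h2
    · by_cases hy0P1 : y0 ∈ P1.support
      · exact no_chord_shortest P1 hP1D hP1min hadj0 hnotE1 h1 hy0P1
      · exact cross x0 y0 hadj0 h1 hx0P2 h2 hy0P1
  · by_cases hy0P2 : y0 ∈ P2.support
    · exact no_chord_shortest P2 hP2D hP2min hadj0 hnotE2 h1 hy0P2
    · by_cases hx0P1 : x0 ∈ P1.support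
      · exact no_chord_shortest P1 hP1D hP1min hadj0 hnotE1 hx0P1 h2
      · exact cross y0 x0 hadj0.symm h2 hy0P2 h1 hx0P1
  · exact no_chord_shortest P2 hP2D hP2min hadj0 hnotE2 h1 h2
end Part4b

section Extra
lemma three_le_card_t {α : Type*} [Finite α] (a b c : α) (hab : a ≠ b) (hac : a ≠ c)
    (hbc : b ≠ c) : 3 ≤ Nat.card α := by
  classical
  have hft := Fintype.ofFinite α
  rw [Nat.card_eq_fintype_card]
  have h : ({a, b, c} : Finset α).card = 3 := by
    rw [Finset.card_insert_of_notMem (by simp [hab, hac]),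
      Finset.card_insert_of_notMem (by simp [hbc]), Finset.card_singleton]
  calc 3 = ({a, b, c} : Finset α).card := h.symm
    _ ≤ Fintype.card α := Finset.card_le_univ _

lemma card_le_two_of_cover {α : Type*} [Finite α] (a b : α) (h : ∀ x : α, x = a ∨ x = b) :
    Nat.card α ≤ 2 := by
  have hs : Function.Surjective (fun c : Bool => if c then a else b) := by
    intro x
    rcases h x with rfl | rfl
    · exact ⟨true, rfl⟩
    · exact ⟨false, rfl⟩
  calc Nat.card α ≤ Nat.card Bool := Nat.card_le_card_of_surjective _ hs
    _ = 2 := by simp [Nat.card_eq_fintype_card]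

lemma walk_invariant {V : Type*} (G : SimpleGraph V) (u : V) (Tu W : Finset V)
    (hstep : ∀ c b : V, (c = u ∨ c ∈ Tu) → c ∉ W → G.Adj c b → b = u ∨ b ∈ Tu) :
    ∀ (a b : V) (q : G.Walk a b), (∀ z ∈ q.support, z ∉ W) → (b = u ∨ b ∈ Tu) →
      (a = u ∨ a ∈ Tu) := by
  intro a b q
  induction q with
  | nil => exact fun _ h => h
  | @cons a1 c1 b1 h q ih =>
    intro hq hb
    have hc : c1 = u ∨ c1 ∈ Tu := ih (fun z hz => hq z
      (by rw [SimpleGraph.Walk.support_cons]; exact List.mem_cons_of_mem _ hz)) hb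
    have hcW : c1 ∉ W := hq c1
      (by rw [SimpleGraph.Walk.support_cons]; exact List.mem_cons_of_mem _ q.start_mem_support)
    exact hstep c1 a1 hc hcW h.symm
end Extra


/-- For every real number `t > 1`, there is no minimally `t`-tough chordal graph with a
universal vertex. -/
theorem stmt_15 {V : Type*} [Fintype V] (G : SimpleGraph V) (t : ℝ≥0) (ht : 1 < t)
    (hchordal : G.IsChordal) (v : V) (hv : G.IsUniversalVertex v)
    (htough : G.toughness = (t : ℝ≥0∞)) (hmin : G.MinimallyTough) :
    False := by
  classical
  have ht' : (1 : ℝ≥0∞) < (t : ℝ≥0∞) := by exact_mod_cast ht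
  -- a separator exists, giving a nonadjacent pair u, r
  have hsepex : ∃ T : Finset V, G.IsSeparator T := by
    by_contra hno
    push_neg at hno
    have h1 := toughness_eq_top_of_no_sep G hno
    rw [htough] at h1
    exact ENNReal.coe_ne_top h1
  obtain ⟨T0, hT0⟩ := hsepex
  obtain ⟨xs, ys, hxsys⟩ := exists_unreachable_of_two_le _ hT0
  set u : V := xs.1 with hu
  set r : V := ys.1 with hr
  have hner : u ≠ r := by
    intro h
    exact hxsys (by rw [show xs = ys from Subtype.ext h])
  have hur : ¬ G.Adj u r := by
    intro h
    exact hxsys (SimpleGraph.Adj.reachable (h : (G.induce _).Adj xs ys))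
  have huv : u ≠ v := fun h => hur (by rw [h]; exact hv r (fun hh => hner (h.trans hh.symm)))
  have hrv : r ≠ v := fun h => hur (by rw [h]; exact (hv u huv).symm)
  have hu_nonuniv : ¬ G.IsUniversalVertex u := fun h => hur (h r hner.symm)
  have hr_nonuniv : ¬ G.IsUniversalVertex r := fun h => hur ((h u hner).symm)
  -- neighbourhood finsets
  set nbr : V → Finset V := fun w => Finset.univ.filter (fun z => G.Adj w z) with hnbrdef
  have hnbr_mem : ∀ w z, z ∈ nbr w ↔ G.Adj w z := by intro w z; simp [hnbrdef]
  set Tu : Finset V := nbr u with hTudef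
  set k : ℕ := Tu.card with hkdef
  have hrTu : r ∉ Tu := fun h => hur ((hnbr_mem u r).mp h)
  have huTu : u ∉ Tu := fun h => G.irrefl ((hnbr_mem u u).mp h)
  -- neighbourhoods separate
  have hnbr_sep : ∀ w ρ : V, ¬ G.Adj w ρ → w ≠ ρ → G.IsSeparator (nbr w) := by
    intro w ρ hadj hne
    have hw : w ∉ nbr w := fun h => G.irrefl ((hnbr_mem w w).mp h)
    have hρ : ρ ∉ nbr w := fun h => hadj ((hnbr_mem w ρ).mp h)
    apply isSeparator_of_no_walk G hw hρ hne
    intro ⟨p, hp⟩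
    refine no_walk_of_closed (G := G) (s := {z | z ∉ nbr w}) hne ?_ ⟨p, hp⟩
    intro z hz
    simp only [Set.mem_setOf_eq, not_not]
    exact (hnbr_mem w z).mpr hz
  -- key bundle for u
  obtain ⟨Su, hvSu, huSu, hnbru, hSu_lt, hSu_ge⟩ := key_bounds G t v hv htough hmin u huv
  have hTu_sep : G.IsSeparator Tu := hnbr_sep u r hur hner
  have h2t_le_k : (t : ℝ≥0∞) * 2 ≤ (k : ℝ≥0∞) := two_t_le_card G htough hTu_sep
  have hTu_sub : Tu ⊆ insert v Su := by
    intro z hz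
    rcases hnbru z ((hnbr_mem u z).mp hz) with h | h
    · simp [h]
    · simp [h]
  have hk_le : k ≤ Su.card + 1 :=
    le_trans (Finset.card_le_card hTu_sub) (Finset.card_insert_le _ _)
  have hk_lt : (k : ℝ≥0∞) < (t : ℝ≥0∞) * 2 + 1 := by
    calc (k : ℝ≥0∞) ≤ (Su.card : ℝ≥0∞) + 1 := by exact_mod_cast hk_le
      _ < (t : ℝ≥0∞) * 2 + 1 := ENNReal.add_lt_add_right (by norm_num) hSu_lt
  have hk_min : ∀ T' : Finset V, (t : ℝ≥0∞) * 2 ≤ (T'.card : ℝ≥0∞) → k ≤ T'.card := by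
    intro T' hT'
    have h1 : (Su.card : ℝ≥0∞) < (T'.card : ℝ≥0∞) := lt_of_lt_of_le hSu_lt hT'
    have h2 : Su.card < T'.card := by exact_mod_cast h1
    omega
  -- degree equality for non-universal vertices ≠ v
  have hdeg : ∀ w : V, w ≠ v → ¬ G.IsUniversalVertex w → (nbr w).card = k := by
    intro w hwv hwnu
    have hex : ∃ ρ, ρ ≠ w ∧ ¬ G.Adj w ρ := by
      by_contra hc
      push_neg at hc
      exact hwnu hc
    obtain ⟨ρ, hρw, hρadj⟩ := hex
    have hsepw := hnbr_sep w ρ hρadj (fun h => hρw h.symm)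
    have h1 : (t : ℝ≥0∞) * 2 ≤ ((nbr w).card : ℝ≥0∞) := two_t_le_card G htough hsepw
    have h2 : k ≤ (nbr w).card := hk_min _ h1
    obtain ⟨Sw, hvSw, hwSw, hnbrw, hSw_lt, _⟩ := key_bounds G t v hv htough hmin w hwv
    have hsub : nbr w ⊆ insert v Sw := by
      intro z hz
      rcases hnbrw z ((hnbr_mem w z).mp hz) with h | h
      · simp [h]
      · simp [h]
    have h3 : (nbr w).card ≤ Sw.card + 1 :=
      le_trans (Finset.card_le_card hsub) (Finset.card_insert_le _ _)
    have h4 : (Sw.card : ℝ≥0∞) < (k : ℝ≥0∞) := lt_of_lt_of_le hSw_lt h2t_le_k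
    have h5 : Sw.card < k := by exact_mod_cast h4
    omega
  -- minimality walks
  have hminsep : ∀ a ∈ Tu, ∃ p : G.Walk u r, ∀ z ∈ p.support, z ∉ Tu.erase a := by
    intro a ha
    by_contra hno
    have hu' : u ∉ Tu.erase a := fun h => huTu (Finset.mem_of_mem_erase h)
    have hr' : r ∉ Tu.erase a := fun h => hrTu (Finset.mem_of_mem_erase h)
    have hsep' : G.IsSeparator (Tu.erase a) := isSeparator_of_no_walk G hu' hr' hner hno
    have h1 := two_t_le_card G htough hsep'
    have h2 := hk_min _ h1
    have h3 : (Tu.erase a).card < k := Finset.card_erase_lt_of_mem ha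
    omega
  -- the neighbourhood of u is a clique
  have hclq : ∀ x ∈ Tu, ∀ y ∈ Tu, x ≠ y → G.Adj x y := by
    intro x hx y hy hxy
    exact clique_of_minsep G hchordal (fun z => hnbr_mem u z) hur hner hminsep hx hy hxy
  -- universal vertices
  set W : Finset V := Finset.univ.filter (fun z => G.IsUniversalVertex z) with hWdef
  have hW_mem : ∀ z, z ∈ W ↔ G.IsUniversalVertex z := by intro z; simp [hWdef]
  have hvW : v ∈ W := (hW_mem v).mpr hv
  have huW : u ∉ W := fun h => hu_nonuniv ((hW_mem u).mp h)
  have hrW : r ∉ W := fun h => hr_nonuniv ((hW_mem r).mp h)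
  have hWTu : W ⊆ Tu := by
    intro z hz
    have hzu : u ≠ z := fun h => hu_nonuniv (h ▸ (hW_mem z).mp hz)
    exact (hnbr_mem u z).mpr (((hW_mem z).mp hz) u hzu).symm
  -- neighbours of Tu \ W vertices stay in {u} ∪ Tu
  have hTuW : ∀ z, z ∈ Tu → z ∉ W → ∀ b, G.Adj z b → b = u ∨ b ∈ Tu := by
    intro z hzTu hzW b hb
    have hzv : z ≠ v := fun h => hzW (h ▸ hvW)
    have hznu : ¬ G.IsUniversalVertex z := fun h => hzW ((hW_mem z).mpr h)
    have hdz : (nbr z).card = k := hdeg z hzv hznu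
    have hsub : ({u} ∪ Tu.erase z) ⊆ nbr z := by
      intro y hy
      rcases Finset.mem_union.mp hy with h1 | h1
      · rw [Finset.mem_singleton] at h1
        subst h1
        exact (hnbr_mem z u).mpr ((hnbr_mem u z).mp hzTu).symm
      · have hy1 := Finset.mem_of_mem_erase h1
        have hy2 : y ≠ z := Finset.ne_of_mem_erase h1
        exact (hnbr_mem z y).mpr (hclq z hzTu y hy1 (fun h => hy2 h.symm))
    have hcard : ({u} ∪ Tu.erase z).card = k := by
      have hdisj : Disjoint ({u} : Finset V) (Tu.erase z) := by
        rw [Finset.disjoint_left]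
        intro a ha
        rw [Finset.mem_singleton] at ha
        subst ha
        intro hc
        exact huTu (Finset.mem_of_mem_erase hc)
      rw [Finset.card_union_of_disjoint hdisj, Finset.card_singleton,
        Finset.card_erase_of_mem hzTu]
      have hkpos : 1 ≤ k := Finset.card_pos.mpr ⟨z, hzTu⟩
      omega
    have heq : ({u} ∪ Tu.erase z) = nbr z :=
      Finset.eq_of_subset_of_card_le hsub (by rw [hdz, hcard])
    have hbmem : b ∈ nbr z := (hnbr_mem z b).mpr hb
    rw [← heq] at hbmem
    rcases Finset.mem_union.mp hbmem with h1 | h1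
    · exact Or.inl (Finset.mem_singleton.mp h1)
    · exact Or.inr (Finset.mem_of_mem_erase h1)
  -- W is a separator
  have hWsep : G.IsSeparator W := by
    apply isSeparator_of_no_walk G huW hrW hner
    rintro ⟨p, hp⟩
    have hstep : ∀ c b : V, (c = u ∨ c ∈ Tu) → c ∉ W → G.Adj c b → b = u ∨ b ∈ Tu := by
      intro c b hc hcW hadj
      rcases hc with rfl | hcTu
      · exact Or.inr ((hnbr_mem u b).mpr hadj)
      · exact hTuW c hcTu hcW b hadj
    have h1 := walk_invariant G u Tu W hstep r u p.reverse (fun z hz => hp z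
      (by rwa [SimpleGraph.Walk.support_reverse, List.mem_reverse] at hz)) (Or.inl rfl)
    rcases h1 with h1 | h1
    · exact hner h1.symm
    · exact hrTu h1
  have hW2t := two_t_le_card G htough hWsep
  have hWk : k ≤ W.card := hk_min _ hW2t
  have hWTu_eq : W = Tu := Finset.eq_of_subset_of_card_le hWTu hWk
  have hWcard : W.card = k := by rw [hWTu_eq]
  -- every non-universal vertex has neighbourhood W
  have hNy : ∀ y, ¬ G.IsUniversalVertex y → nbr y = W := by
    intro y hynu
    have hyW : y ∉ W := fun h => hynu ((hW_mem y).mp h)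
    have hyv : y ≠ v := fun h => hyW (h ▸ hvW)
    have hdy : (nbr y).card = k := hdeg y hyv hynu
    have hsub : W ⊆ nbr y := by
      intro z hz
      have hzy : z ≠ y := fun h => hyW (h ▸ hz)
      exact (hnbr_mem y z).mpr (((hW_mem z).mp hz) y (fun h => hzy h.symm)).symm
    exact (Finset.eq_of_subset_of_card_le hsub (by rw [hdy]; exact hWk)).symm
  -- at most two non-universal vertices
  have hI2 : ∀ y, ¬ G.IsUniversalVertex y → y = u ∨ y = r := by
    intro y hynu
    by_contra hc
    push_neg at hc
    obtain ⟨hyu, hyr⟩ := hc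
    have hcompl : ∀ w, ¬ G.IsUniversalVertex w → w ∈ ((↑W : Set V)ᶜ) :=
      fun w hw => mem_complS.mpr (fun h => hw ((hW_mem w).mp h))
    have hunr : ∀ (a b : V) (ha : ¬ G.IsUniversalVertex a) (hb : ¬ G.IsUniversalVertex b), a ≠ b →
        ¬ (G.induce ((↑W : Set V)ᶜ)).Reachable ⟨a, hcompl a ha⟩ ⟨b, hcompl b hb⟩ := by
      intro a b ha hb hab hreach
      rw [reachable_induce_iff] at hreach
      refine no_walk_of_closed (G := G) (s := ((↑W : Set V)ᶜ)) hab ?_ hreach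
      intro z hz hzC
      have hzW : z ∈ W := by rw [← hNy a ha]; exact (hnbr_mem a z).mpr hz
      exact mem_complS.mp hzC hzW
    have h3 : 3 ≤ componentCount (G.induce ((↑W : Set V)ᶜ)) := by
      apply three_le_card_t
        ((G.induce ((↑W : Set V)ᶜ)).connectedComponentMk ⟨u, hcompl u hu_nonuniv⟩)
        ((G.induce ((↑W : Set V)ᶜ)).connectedComponentMk ⟨r, hcompl r hr_nonuniv⟩)
        ((G.induce ((↑W : Set V)ᶜ)).connectedComponentMk ⟨y, hcompl y hynu⟩)
      · intro h
        exact hunr u r hu_nonuniv hr_nonuniv hner (SimpleGraph.ConnectedComponent.eq.mp h)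
      · intro h
        exact hunr u y hu_nonuniv hynu (fun hh => hyu hh.symm)
          (SimpleGraph.ConnectedComponent.eq.mp h)
      · intro h
        exact hunr r y hr_nonuniv hynu (fun hh => hyr hh.symm)
          (SimpleGraph.ConnectedComponent.eq.mp h)
    have hratio := htough ▸ toughness_le_ratio G hWsep
    have hle : ((W.card : ℝ≥0∞)) / (componentCount (G.induce ((↑W : Set V)ᶜ)) : ℝ≥0∞)
        ≤ (k : ℝ≥0∞) / 3 := by
      apply ENNReal.div_le_div
      · exact_mod_cast le_of_eq hWcard
      · exact_mod_cast h3
    have h4 : (t : ℝ≥0∞) ≤ (k : ℝ≥0∞) / 3 := hratio.trans hle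
    rw [ENNReal.le_div_iff_mul_le (Or.inl (by norm_num)) (Or.inl (by norm_num))] at h4
    have h5 : (t : ℝ≥0∞) * 2 + 1 < (t : ℝ≥0∞) * 3 := by
      have heq3 : (t : ℝ≥0∞) * 3 = (t : ℝ≥0∞) * 2 + t := by ring
      rw [heq3]
      exact ENNReal.add_lt_add_left
        (ENNReal.mul_ne_top ENNReal.coe_ne_top (by norm_num)) ht'
    exact absurd hk_lt (not_lt.mpr (lt_of_lt_of_le h5 h4).le)
  -- k ≥ 3 and two universal vertices w1 w2
  have h2k' : (2 : ℝ≥0∞) < (t : ℝ≥0∞) * 2 := by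
    calc (2 : ℝ≥0∞) = 1 * 2 := by ring
      _ < (t : ℝ≥0∞) * 2 := ENNReal.mul_lt_mul_left (by norm_num) (by norm_num) ht'
  have hk3 : 3 ≤ k := by
    have h1 : (2 : ℝ≥0∞) < (k : ℝ≥0∞) := lt_of_lt_of_le h2k' h2t_le_k
    have h2 : (2 : ℕ) < k := by exact_mod_cast h1
    omega
  have hW1 : 1 < W.card := by omega
  obtain ⟨w1, hw1W, w2, hw2W, hw12ne⟩ := Finset.one_lt_card.mp hW1
  have hw1u : G.IsUniversalVertex w1 := (hW_mem w1).mp hw1W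
  have hw2u : G.IsUniversalVertex w2 := (hW_mem w2).mp hw2W
  have hadj12 : G.Adj w1 w2 := hw1u w2 (fun h => hw12ne h.symm)
  have he12 : s(w1, w2) ∈ G.edgeSet := G.mem_edgeSet.mpr hadj12
  have hlt := htough ▸ hmin _ he12
  obtain ⟨S, hsepS, hratioS⟩ := exists_sep_of_toughness_lt _ hlt
  set H : SimpleGraph V := G.deleteEdges {s(w1, w2)} with hHdef
  have hHadj : ∀ a b, G.Adj a b → ¬ (a = w1 ∧ b = w2) → ¬ (a = w2 ∧ b = w1) → H.Adj a b := by
    intro a b h h1 h2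
    rw [hHdef, SimpleGraph.deleteEdges_adj]
    refine ⟨h, ?_⟩
    intro hmem
    rw [Set.mem_singleton_iff, Sym2.eq_iff] at hmem
    rcases hmem with h3 | h3
    exacts [h1 h3, h2 h3]
  have hu1 : u ≠ w1 := fun h => huW (h ▸ hw1W)
  have hu2 : u ≠ w2 := fun h => huW (h ▸ hw2W)
  have hr1 : r ≠ w1 := fun h => hrW (h ▸ hw1W)
  have hr2 : r ≠ w2 := fun h => hrW (h ▸ hw2W)
  have hHuw1 : H.Adj u w1 := hHadj u w1 (hw1u u hu1).symm
    (fun h => hu1 h.1) (fun h => hu2 h.1)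
  have hHuw2 : H.Adj u w2 := hHadj u w2 (hw2u u hu2).symm
    (fun h => hu1 h.1) (fun h => hu2 h.1)
  have hHrw1 : H.Adj r w1 := hHadj r w1 (hw1u r hr1).symm
    (fun h => hr1 h.1) (fun h => hr2 h.1)
  have hHrw2 : H.Adj r w2 := hHadj r w2 (hw2u r hr2).symm
    (fun h => hr1 h.1) (fun h => hr2 h.1)
  -- step1: other universal vertices are in S
  have hstep1 : ∀ w ∈ W, w ≠ w1 → w ≠ w2 → w ∈ S := by
    intro w hwW hww1 hww2
    by_contra hwS
    have hwC : w ∈ ((↑S : Set V)ᶜ) := mem_complS.mpr hwS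
    have hwu : G.IsUniversalVertex w := (hW_mem w).mp hwW
    have hreach : ∀ x : ((↑S : Set V)ᶜ : Set V),
        (H.induce ((↑S : Set V)ᶜ)).Reachable x ⟨w, hwC⟩ := by
      intro x
      by_cases hxw : x.1 = w
      · rw [show x = (⟨w, hwC⟩ : ((↑S : Set V)ᶜ : Set V)) from Subtype.ext hxw]
      · have hadj : H.Adj w x.1 := hHadj w x.1 (hwu x.1 hxw)
          (fun h => hww1 h.1) (fun h => hww2 h.1)
        have hadj' : (H.induce ((↑S : Set V)ᶜ)).Adj ⟨w, hwC⟩ x := hadj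
        exact hadj'.symm.reachable
    have hle := componentCount_le_one _ (fun x y => (hreach x).trans (hreach y).symm)
    rw [SimpleGraph.IsSeparator] at hsepS
    omega
  obtain ⟨p0, q0, hp0q0⟩ := exists_unreachable_of_two_le _ hsepS
  have hp0S : p0.1 ∉ S := mem_complS.mp p0.2
  have hq0S : q0.1 ∉ S := mem_complS.mp q0.2
  have hp0q0ne : p0.1 ≠ q0.1 := fun h => hp0q0 (by rw [show p0 = q0 from Subtype.ext h])
  have hnadjH : ¬ H.Adj p0.1 q0.1 := by
    intro h
    have h' : (H.induce ((↑S : Set V)ᶜ)).Adj p0 q0 := h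
    exact hp0q0 h'.reachable
  have hclass : ∀ x : V, x ∉ S → x = u ∨ x = r ∨ x = w1 ∨ x = w2 := by
    intro x hxS
    by_cases hxW : x ∈ W
    · by_cases h1 : x = w1
      · exact Or.inr (Or.inr (Or.inl h1))
      · by_cases h2 : x = w2
        · exact Or.inr (Or.inr (Or.inr h2))
        · exact absurd (hstep1 x hxW h1 h2) hxS
    · have hxnu : ¬ G.IsUniversalVertex x := fun h => hxW ((hW_mem x).mpr h)
      rcases hI2 x hxnu with h | h
      · exact Or.inl h
      · exact Or.inr (Or.inl h)
  -- the generic finishing move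
  have hfinish : ∀ a b : ((↑S : Set V)ᶜ : Set V),
      (∀ x : V, x ∉ S → x = a.1 ∨ x = b.1) → k ≤ S.card → False := by
    intro a b hcover hcard
    have hc2 : componentCount (H.induce ((↑S : Set V)ᶜ)) ≤ 2 := by
      refine le_trans (componentCount_le_card _) ?_
      apply card_le_two_of_cover a b
      intro x
      rcases hcover x.1 (mem_complS.mp x.2) with h | h
      · exact Or.inl (Subtype.ext h)
      · exact Or.inr (Subtype.ext h)
    have ht2 : (t : ℝ≥0∞) ≤ (k : ℝ≥0∞) / 2 := by
      rw [ENNReal.le_div_iff_mul_le (Or.inl (by norm_num)) (Or.inl (by norm_num))]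
      exact h2t_le_k
    have hgrow : (k : ℝ≥0∞) / 2 ≤ (S.card : ℝ≥0∞)
        / (componentCount (H.induce ((↑S : Set V)ᶜ)) : ℝ≥0∞) := by
      apply ENNReal.div_le_div
      · exact_mod_cast hcard
      · exact_mod_cast hc2
    exact absurd hratioS (not_lt.mpr (ht2.trans hgrow))
  -- case distinction helpers
  have hcase_ur : ∀ a b : ((↑S : Set V)ᶜ : Set V),
      ¬ (H.induce ((↑S : Set V)ᶜ)).Reachable a b → a.1 = u → b.1 = r → False := by
    intro a b hab ha hb
    have hw1S : w1 ∈ S := by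
      by_contra hw1S
      have hw1C : w1 ∈ ((↑S : Set V)ᶜ) := mem_complS.mpr hw1S
      have had1 : (H.induce ((↑S : Set V)ᶜ)).Adj a ⟨w1, hw1C⟩ := by
        show H.Adj a.1 w1
        rw [ha]; exact hHuw1
      have had2 : (H.induce ((↑S : Set V)ᶜ)).Adj ⟨w1, hw1C⟩ b := by
        show H.Adj w1 b.1
        rw [hb]; exact hHrw1.symm
      exact hab (had1.reachable.trans had2.reachable)
    have hw2S : w2 ∈ S := by
      by_contra hw2S
      have hw2C : w2 ∈ ((↑S : Set V)ᶜ) := mem_complS.mpr hw2S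
      have had1 : (H.induce ((↑S : Set V)ᶜ)).Adj a ⟨w2, hw2C⟩ := by
        show H.Adj a.1 w2
        rw [ha]; exact hHuw2
      have had2 : (H.induce ((↑S : Set V)ᶜ)).Adj ⟨w2, hw2C⟩ b := by
        show H.Adj w2 b.1
        rw [hb]; exact hHrw2.symm
      exact hab (had1.reachable.trans had2.reachable)
    -- now W ⊆ S
    have hWS : W ⊆ S := by
      intro w hwW
      by_cases h1 : w = w1
      · exact h1 ▸ hw1S
      · by_cases h2 : w = w2
        · exact h2 ▸ hw2S
        · exact hstep1 w hwW h1 h2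
    apply hfinish a b
    · intro x hxS
      rcases hclass x hxS with h | h | h | h
      · exact Or.inl (by rw [h, ha])
      · exact Or.inr (by rw [h, hb])
      · exact absurd (h ▸ hw1S) hxS
      · exact absurd (h ▸ hw2S) hxS
    · calc k = W.card := hWcard.symm
        _ ≤ S.card := Finset.card_le_card hWS
  have hcase_w : ∀ a b : ((↑S : Set V)ᶜ : Set V),
      ¬ (H.induce ((↑S : Set V)ᶜ)).Reachable a b → a.1 = w1 → b.1 = w2 → False := by
    intro a b hab ha hb
    have huS : u ∈ S := by
      by_contra huS
      have huC : u ∈ ((↑S : Set V)ᶜ) := mem_complS.mpr huS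
      have had1 : (H.induce ((↑S : Set V)ᶜ)).Adj a ⟨u, huC⟩ := by
        show H.Adj a.1 u
        rw [ha]; exact hHuw1.symm
      have had2 : (H.induce ((↑S : Set V)ᶜ)).Adj ⟨u, huC⟩ b := by
        show H.Adj u b.1
        rw [hb]; exact hHuw2
      exact hab (had1.reachable.trans had2.reachable)
    have hrS : r ∈ S := by
      by_contra hrS
      have hrC : r ∈ ((↑S : Set V)ᶜ) := mem_complS.mpr hrS
      have had1 : (H.induce ((↑S : Set V)ᶜ)).Adj a ⟨r, hrC⟩ := by
        show H.Adj a.1 r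
        rw [ha]; exact hHrw1.symm
      have had2 : (H.induce ((↑S : Set V)ᶜ)).Adj ⟨r, hrC⟩ b := by
        show H.Adj r b.1
        rw [hb]; exact hHrw2
      exact hab (had1.reachable.trans had2.reachable)
    apply hfinish a b
    · intro x hxS
      rcases hclass x hxS with h | h | h | h
      · exact absurd (h ▸ huS) hxS
      · exact absurd (h ▸ hrS) hxS
      · exact Or.inl (by rw [h, ha])
      · exact Or.inr (by rw [h, hb])
    · -- S contains (W.erase w1).erase w2 ∪ {u, r}
      have hsub : ((W.erase w1).erase w2) ∪ {u, r} ⊆ S := by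
        intro z hz
        rcases Finset.mem_union.mp hz with h1 | h1
        · have hzW := Finset.mem_of_mem_erase (Finset.mem_of_mem_erase h1)
          have hz2 : z ≠ w2 := Finset.ne_of_mem_erase h1
          have hz1 : z ≠ w1 := Finset.ne_of_mem_erase (Finset.mem_of_mem_erase h1)
          exact hstep1 z hzW hz1 hz2
        · rcases Finset.mem_insert.mp h1 with h2 | h2
          · exact h2 ▸ huS
          · exact (Finset.mem_singleton.mp h2) ▸ hrS
      have hdisj : Disjoint ((W.erase w1).erase w2) ({u, r} : Finset V) := by
        rw [Finset.disjoint_right]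
        intro z hz
        rcases Finset.mem_insert.mp hz with h2 | h2
        · subst h2
          intro hc
          exact huW (Finset.mem_of_mem_erase (Finset.mem_of_mem_erase hc))
        · rw [Finset.mem_singleton] at h2
          subst h2
          intro hc
          exact hrW (Finset.mem_of_mem_erase (Finset.mem_of_mem_erase hc))
      have hcard2 : (((W.erase w1).erase w2) ∪ ({u, r} : Finset V)).card = k := by
        rw [Finset.card_union_of_disjoint hdisj]
        have hw2e : w2 ∈ W.erase w1 := Finset.mem_erase.mpr ⟨fun h => hw12ne h.symm, hw2W⟩
        rw [Finset.card_erase_of_mem hw2e, Finset.card_erase_of_mem hw1W, hWcard]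
        rw [Finset.card_pair hner]
        omega
      calc k = (((W.erase w1).erase w2) ∪ ({u, r} : Finset V)).card := hcard2.symm
        _ ≤ S.card := Finset.card_le_card hsub
  -- final case analysis
  rcases hclass p0.1 hp0S with h1 | h1 | h1 | h1 <;> rcases hclass q0.1 hq0S with h2 | h2 | h2 | h2
  · exact hp0q0ne (h1.trans h2.symm)
  · exact hcase_ur p0 q0 hp0q0 h1 h2
  · exact hnadjH (by rw [h1, h2]; exact hHuw1)
  · exact hnadjH (by rw [h1, h2]; exact hHuw2)
  · exact hcase_ur q0 p0 (fun h => hp0q0 h.symm) h2 h1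
  · exact hp0q0ne (h1.trans h2.symm)
  · exact hnadjH (by rw [h1, h2]; exact hHrw1)
  · exact hnadjH (by rw [h1, h2]; exact hHrw2)
  · exact hnadjH (by rw [h1, h2]; exact hHuw1.symm)
  · exact hnadjH (by rw [h1, h2]; exact hHrw1.symm)
  · exact hp0q0ne (h1.trans h2.symm)
  · exact hcase_w p0 q0 hp0q0 h1 h2
  · exact hnadjH (by rw [h1, h2]; exact hHuw2.symm)
  · exact hnadjH (by rw [h1, h2]; exact hHrw2.symm)
  · exact hcase_w q0 p0 (fun h => hp0q0 h.symm) h2 h1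
  · exact hp0q0ne (h1.trans h2.symm)
end

section
/- Let t ∈ (1/2, 1] be a real number. Then there is no minimally t-tough graph with a universal vertex. -/
open SimpleGraph
open scoped ENNReal NNReal

/-- A vertex is universal if it is adjacent to all other vertices. -/
def SimpleGraph.IsUniversalVtx {V : Type*} (G : SimpleGraph V) (v : V) : Prop :=
  ∀ w, w ≠ v → G.Adj v w


section AuxStmt16

variable {V : Type*}

private lemma cc_le_one_of_hub [Finite V] {G : SimpleGraph V} {s : Set V} {z : V} (hz : z ∈ s)
    (h : ∀ u ∈ s, u ≠ z → G.Adj z u) :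
    Nat.card (G.induce s).ConnectedComponent ≤ 1 := by
  have hreach : ∀ u : s, (G.induce s).Reachable u ⟨z, hz⟩ := by
    rintro ⟨u, hu⟩
    rcases eq_or_ne u z with rfl | hne
    · exact Reachable.refl _
    · exact Adj.reachable (by simpa using (h u hu hne).symm)
  have hsub : Subsingleton (G.induce s).ConnectedComponent := by
    constructor
    exact ConnectedComponent.ind₂ fun a b =>
      ConnectedComponent.sound ((hreach a).trans (hreach b).symm)
  exact Finite.card_le_one_iff_subsingleton.mpr hsub

private lemma induce_deleteEdges_eq {G : SimpleGraph V} {e : Sym2 V} {s : Set V} {x : V}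
    (hxe : x ∈ e) (hxs : x ∉ s) :
    (G.deleteEdges {e}).induce s = G.induce s := by
  ext a b
  simp only [comap_adj, Function.Embedding.coe_subtype, deleteEdges_adj,
    Set.mem_singleton_iff]
  constructor
  · rintro ⟨h1, _⟩; exact h1
  · intro h1
    refine ⟨h1, fun heq => ?_⟩
    rw [← heq] at hxe
    rcases Sym2.mem_iff.mp hxe with h | h
    · exact hxs (h ▸ a.2)
    · exact hxs (h ▸ b.2)

private lemma walk_transfer {G : SimpleGraph V} {v : V} {sv : Set V}
    (hsv : ∀ x : V, x ∈ sv ↔ x ≠ v) {S₀ : Finset V}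
    (hdeg : ∀ w : V, w ≠ v → ∃ x : V, ∀ u : V, G.Adj w u → u = v ∨ u = x) :
    ∀ (n : ℕ) (a b : sv) (p : (G.induce sv).Walk a b), p.length ≤ n →
      ∀ (ha : (a : V) ∈ ((↑S₀ : Set V)ᶜ)) (hb : (b : V) ∈ ((↑S₀ : Set V)ᶜ)),
      (G.induce ((↑S₀ : Set V)ᶜ)).Reachable ⟨a, ha⟩ ⟨b, hb⟩ := by
  intro n
  induction n with
  | zero =>
    intro a b p hn ha hb
    cases p with
    | nil => exact Reachable.refl _
    | cons h q => simp [Walk.length_cons] at hn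
  | succ n ih =>
    intro a b p hn ha hb
    cases p with
    | nil => exact Reachable.refl _
    | @cons _ c _ h q =>
      by_cases hc : (c : V) ∈ (↑S₀ : Set V)
      · have hcv : (c : V) ≠ v := (hsv _).mp c.2
        obtain ⟨x, hx⟩ := hdeg c hcv
        have hGa : G.Adj (c : V) (a : V) :=
          (show G.Adj (a : V) (c : V) by simpa using h).symm
        have hax : (a : V) = x := (hx _ hGa).resolve_left ((hsv _).mp a.2)
        cases q with
        | nil => exact absurd hc (by simpa using hb)
        | @cons _ d _ h' r =>
          have hGd : G.Adj (c : V) (d : V) := by simpa using h'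
          have hdx : (d : V) = x := (hx _ hGd).resolve_left ((hsv _).mp d.2)
          have hda : d = a := Subtype.ext (hdx.trans hax.symm)
          subst hda
          refine ih _ _ r ?_ ha hb
          simp only [Walk.length_cons] at hn
          omega
      · have hc' : (c : V) ∈ ((↑S₀ : Set V)ᶜ) := hc
        have hadj : (G.induce ((↑S₀ : Set V)ᶜ)).Adj ⟨a, ha⟩ ⟨c, hc'⟩ := by
          simpa using (show G.Adj (a : V) (c : V) by simpa using h)
        refine (hadj.reachable).trans (ih c b q ?_ hc' hb)
        simp only [Walk.length_cons] at hn
        omega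

end AuxStmt16

/-- For `t ∈ (1/2, 1]`, there is no minimally `t`-tough graph with a universal vertex. -/


theorem stmt_16 {V : Type*} [Fintype V] (G : SimpleGraph V) (t : ℝ≥0)
    (ht1 : 1 / 2 < t) (ht2 : t ≤ 1) (v : V) (hv : G.IsUniversalVtx v)
    (htough : G.toughness = (t : ℝ≥0∞)) (hmin : G.MinimallyTough) :
    False := by
  classical
  have hle : ∀ S : Finset V, G.IsSeparator S →
      (t : ℝ≥0∞) ≤ (S.card : ℝ≥0∞) / (componentCount (G.induce ((↑S : Set V)ᶜ)) : ℝ≥0∞) := by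
    intro S hS
    rw [← htough]
    exact iInf₂_le S hS
  have hex : ∃ S : Finset V, G.IsSeparator S := by
    by_contra h
    push_neg at h
    have htop : G.toughness = ⊤ := by
      unfold SimpleGraph.toughness
      rw [iInf_eq_top]
      intro S
      rw [iInf_eq_top]
      intro hS
      exact absurd hS (h S)
    rw [htough] at htop
    exact ENNReal.coe_ne_top htop
  -- Every vertex other than `v` has at most one neighbour besides `v`.
  have hdeg : ∀ w : V, w ≠ v → ∃ x : V, ∀ u : V, G.Adj w u → u = v ∨ u = x := by
    intro w hw
    have he : s(v, w) ∈ G.edgeSet := G.mem_edgeSet.mpr (hv w hw)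
    have hlt := hmin _ he
    rw [htough] at hlt
    set G' := G.deleteEdges {s(v, w)} with hG'
    obtain ⟨S, hSsep, hSlt⟩ : ∃ S : Finset V, G'.IsSeparator S ∧
        (S.card : ℝ≥0∞) / (componentCount (G'.induce ((↑S : Set V)ᶜ)) : ℝ≥0∞) < (t : ℝ≥0∞) := by
      by_contra hcon
      push_neg at hcon
      have : (t : ℝ≥0∞) ≤ G'.toughness := le_iInf₂ fun S hS => hcon S hS
      exact absurd hlt this.not_gt
    have hvw_notin : ∀ x : V, x ∈ s(v, w) → x ∉ S := by
      intro x hxe hxS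
      have heq : G'.induce ((↑S : Set V)ᶜ) = G.induce ((↑S : Set V)ᶜ) :=
        induce_deleteEdges_eq hxe (by simp [hxS])
      have hsep : G.IsSeparator S := by
        unfold SimpleGraph.IsSeparator at hSsep ⊢
        rwa [heq] at hSsep
      have h1 := hle S hsep
      rw [← heq] at h1
      exact absurd hSlt h1.not_gt
    have hvS : v ∉ S := hvw_notin v (Sym2.mem_mk_left v w)
    have hwS : w ∉ S := hvw_notin w (Sym2.mem_mk_right v w)
    have hvmem : v ∈ ((↑S : Set V)ᶜ) := by simpa using hvS
    have hwmem : w ∈ ((↑S : Set V)ᶜ) := by simpa using hwS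
    set H := G'.induce ((↑S : Set V)ᶜ) with hH
    have hvcomp : ∀ u : ((↑S : Set V)ᶜ : Set V), (u : V) ≠ w →
        H.connectedComponentMk u = H.connectedComponentMk ⟨v, hvmem⟩ := by
      rintro ⟨u, hu⟩ hne
      rcases eq_or_ne u v with rfl | hnev
      · rfl
      · refine (ConnectedComponent.sound (Adj.reachable ?_)).symm
        show H.Adj ⟨v, hvmem⟩ ⟨u, hu⟩
        simp only [hH, hG', comap_adj, Function.Embedding.coe_subtype, deleteEdges_adj,
          Set.mem_singleton_iff]
        exact ⟨hv u hnev, fun heq => hne (Sym2.congr_right.mp heq)⟩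
    have h2H : 2 ≤ componentCount H := hSsep
    have hcle : componentCount H ≤ 2 := by
      have hsurj : Function.Surjective (fun b : Bool =>
          if b then H.connectedComponentMk ⟨v, hvmem⟩ else H.connectedComponentMk ⟨w, hwmem⟩) := by
        refine ConnectedComponent.ind fun u => ?_
        rcases eq_or_ne (u : V) w with hew | hnew
        · exact ⟨false, by simp [show u = ⟨w, hwmem⟩ from Subtype.ext hew]⟩
        · exact ⟨true, by simpa using (hvcomp u hnew).symm⟩
      have := Nat.card_le_card_of_surjective _ hsurj
      simpa [componentCount] using this
    have hwv : H.connectedComponentMk ⟨w, hwmem⟩ ≠ H.connectedComponentMk ⟨v, hvmem⟩ := by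
      intro heq
      have hall : ∀ u : ((↑S : Set V)ᶜ : Set V),
          H.connectedComponentMk u = H.connectedComponentMk ⟨v, hvmem⟩ := by
        intro u
        rcases eq_or_ne (u : V) w with hew | hnew
        · rw [show u = ⟨w, hwmem⟩ from Subtype.ext hew]; exact heq
        · exact hvcomp u hnew
      have hsub : Subsingleton H.ConnectedComponent :=
        ⟨ConnectedComponent.ind₂ fun a b => (hall a).trans (hall b).symm⟩
      have h1 : componentCount H ≤ 1 := Finite.card_le_one_iff_subsingleton.mpr hsub
      omega
    have hcard : S.card ≤ 1 := by
      have hc0 : (componentCount H : ℝ≥0∞) ≠ 0 := by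
        exact_mod_cast (show componentCount H ≠ 0 by omega)
      have hlt2 : (S.card : ℝ≥0∞) < (t : ℝ≥0∞) * (componentCount H : ℝ≥0∞) :=
        (ENNReal.div_lt_iff (Or.inl hc0) (Or.inl (ENNReal.natCast_ne_top _))).mp hSlt
      have hmul : (t : ℝ≥0∞) * (componentCount H : ℝ≥0∞) ≤ 1 * 2 := by
        refine mul_le_mul' ?_ ?_
        · exact_mod_cast ht2
        · exact_mod_cast hcle
      have hfin : (S.card : ℝ≥0∞) < ((2 : ℕ) : ℝ≥0∞) := by
        refine lt_of_lt_of_le (lt_of_lt_of_le hlt2 hmul) ?_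
        norm_num
      have : S.card < 2 := by exact_mod_cast hfin
      omega
    have hnbr : ∀ u : V, G.Adj w u → u = v ∨ u ∈ S := by
      intro u hadj
      by_contra hcon
      push_neg at hcon
      obtain ⟨hunv, hunS⟩ := hcon
      have humem : u ∈ ((↑S : Set V)ᶜ) := by simpa using hunS
      have hunw : u ≠ w := fun h => G.irrefl (h ▸ hadj)
      have h1 := hvcomp ⟨u, humem⟩ hunw
      have hadj' : H.Adj ⟨w, hwmem⟩ ⟨u, humem⟩ := by
        simp only [hH, hG', comap_adj, Function.Embedding.coe_subtype, deleteEdges_adj,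
          Set.mem_singleton_iff]
        refine ⟨hadj, fun heq => ?_⟩
        have hvmem' : v ∈ s(w, u) := heq ▸ Sym2.mem_mk_left v w
        rcases Sym2.mem_iff.mp hvmem' with h | h
        · exact hw h.symm
        · exact hunv h.symm
      have h2 : H.connectedComponentMk ⟨u, humem⟩ = H.connectedComponentMk ⟨w, hwmem⟩ :=
        ConnectedComponent.sound hadj'.symm.reachable
      exact hwv (h2.symm.trans h1)
    rcases Finset.eq_empty_or_nonempty S with rfl | ⟨x, hx⟩
    · refine ⟨v, fun u h => ?_⟩
      rcases hnbr u h with h' | h'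
      · exact Or.inl h'
      · simp at h'
    · refine ⟨x, fun u h => ?_⟩
      rcases hnbr u h with h' | h'
      · exact Or.inl h'
      · exact Or.inr (Finset.card_le_one.mp hcard u h' x hx)
  -- Now derive the contradiction.
  obtain ⟨S₀, hS₀⟩ := hex
  have h2c : 2 ≤ componentCount (G.induce ((↑S₀ : Set V)ᶜ)) := hS₀
  have hvS₀ : v ∈ S₀ := by
    by_contra hvn
    have h1 : componentCount (G.induce ((↑S₀ : Set V)ᶜ)) ≤ 1 :=
      cc_le_one_of_hub (z := v) (by simpa using hvn) (fun u _ hu => hv u hu)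
    omega
  have hnotsep : ¬ G.IsSeparator {v} := by
    intro hsep
    have h1 := hle {v} hsep
    have hc2 : 2 ≤ componentCount (G.induce ((↑({v} : Finset V) : Set V)ᶜ)) := hsep
    have hhalf : (t : ℝ≥0∞) ≤ ((1 / 2 : ℝ≥0) : ℝ≥0∞) := by
      rw [ENNReal.coe_div (by norm_num), ENNReal.coe_one]
      refine h1.trans ?_
      rw [Finset.card_singleton]
      push_cast
      gcongr
      exact_mod_cast hc2
    have := ENNReal.coe_le_coe.mp hhalf
    exact absurd ht1 this.not_gt
  have honel : componentCount (G.induce ((↑({v} : Finset V) : Set V)ᶜ)) ≤ 1 := by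
    unfold SimpleGraph.IsSeparator at hnotsep
    omega
  set sv : Set V := ((↑({v} : Finset V) : Set V)ᶜ) with hsv_def
  have hsv : ∀ x : V, x ∈ sv ↔ x ≠ v := by intro x; simp [hsv_def]
  have hnt : Nontrivial (G.induce ((↑S₀ : Set V)ᶜ)).ConnectedComponent := by
    have : 1 < Nat.card (G.induce ((↑S₀ : Set V)ᶜ)).ConnectedComponent := h2c
    exact Finite.one_lt_card_iff_nontrivial.mp this
  obtain ⟨c₁, c₂, hcc⟩ := hnt
  obtain ⟨x, rfl⟩ := c₁.exists_rep
  obtain ⟨y, rfl⟩ := c₂.exists_rep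
  have hxv : (x : V) ∈ sv := (hsv _).mpr (fun h => by
    have := x.2; rw [h] at this; exact this (by simpa using hvS₀))
  have hyv : (y : V) ∈ sv := (hsv _).mpr (fun h => by
    have := y.2; rw [h] at this; exact this (by simpa using hvS₀))
  have hsub : Subsingleton (G.induce sv).ConnectedComponent :=
    Finite.card_le_one_iff_subsingleton.mp honel
  have hreach : (G.induce sv).Reachable ⟨x, hxv⟩ ⟨y, hyv⟩ :=
    ConnectedComponent.exact (Subsingleton.elim _ _)
  obtain ⟨p⟩ := hreach
  have hfin := walk_transfer hsv hdeg p.length ⟨(x : V), hxv⟩ ⟨(y : V), hyv⟩ p le_rfl x.2 y.2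
  exact hcc (ConnectedComponent.sound hfin)
end

section
/- Let G be a co-chordal graph whose complement is connected with diameter d ≥ 3, let u, w be simplicial vertices of the complement at distance d, let U = N_{Ḡ}(u), W = N_{Ḡ}(w), X = V(G) \ (U ∪ W ∪ {u,w}), and let m be the maximum size of a matching in G[U ∪ W]. Then κ_G(u,w) = |X| + m + 1. -/
open SimpleGraph
open scoped ENNReal NNReal

private lemma aux_ncard_le_maxMatching {V : Type*} [Fintype V] (G : SimpleGraph V) (s : Set V)
    (E : Set (Sym2 V))
    (hE : ∀ e ∈ E, ∃ a b, e = s(a, b) ∧ a ∈ s ∧ b ∈ s ∧ G.Adj a b)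
    (hdisj : ∀ e ∈ E, ∀ f ∈ E, ∀ v, v ∈ e → v ∈ f → e = f) :
    E.ncard ≤ (G.induce s).maxMatching := by
  classical
  let M : (G.induce s).Subgraph :=
    { verts := {a : s | ∃ b : s, G.Adj ↑a ↑b ∧ s((a : V), (b : V)) ∈ E}
      Adj := fun a b => G.Adj ↑a ↑b ∧ s((a : V), (b : V)) ∈ E
      adj_sub := fun h => h.1
      edge_vert := fun {a b} h => ⟨b, h⟩
      symm := ⟨fun a b h => ⟨h.1.symm, by rw [Sym2.eq_swap]; exact h.2⟩⟩ }
  have hM : M.IsMatching := by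
    rintro v ⟨b, hb⟩
    refine ⟨b, hb, ?_⟩
    rintro b' ⟨hadj', hmem'⟩
    have he := hdisj _ hmem' _ hb.2 (↑v) (by simp) (by simp)
    exact Subtype.ext (Sym2.congr_right.mp he)
  have hEeq : E = Sym2.map (Subtype.val) '' M.edgeSet := by
    ext e
    constructor
    · intro he
      obtain ⟨a, b, rfl, ha, hb, hab⟩ := hE e he
      refine ⟨s(⟨a, ha⟩, ⟨b, hb⟩), ?_, by simp⟩
      exact SimpleGraph.Subgraph.mem_edgeSet.mpr ⟨hab, he⟩
    · rintro ⟨e', he', rfl⟩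
      induction e' using Sym2.ind with
      | _ a b => exact (SimpleGraph.Subgraph.mem_edgeSet.mp he').2
  have hcard : M.edgeSet.ncard = E.ncard := by
    rw [hEeq, Set.ncard_image_of_injOn (Sym2.map.injective Subtype.val_injective).injOn]
  have hbdd : BddAbove {n | ∃ M : (G.induce s).Subgraph, M.IsMatching ∧ M.edgeSet.ncard = n} := by
    refine ⟨Nat.card (Sym2 s), ?_⟩
    rintro n ⟨N, -, rfl⟩
    have := Set.ncard_le_ncard (Set.subset_univ N.edgeSet) Set.finite_univ
    simpa [Set.ncard_univ] using this
  calc E.ncard = M.edgeSet.ncard := hcard.symm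
    _ ≤ _ := le_csSup hbdd ⟨M, hM, rfl⟩

private lemma aux_exists_abstract {V : Type*} [Fintype V] (G : SimpleGraph V) (U W' : Set V)
    (hU : ∀ a ∈ U, ∀ b ∈ U, ¬G.Adj a b)
    (hW : ∀ a ∈ W', ∀ b ∈ W', ¬G.Adj a b) :
    ∃ E : Set (Sym2 V),
      (∀ e ∈ E, ∃ a b, e = s(a, b) ∧ a ∈ U ∧ b ∈ W' ∧ G.Adj a b) ∧
      (∀ e ∈ E, ∀ f ∈ E, ∀ v, v ∈ e → v ∈ f → e = f) ∧
      E.ncard = (G.induce (U ∪ W')).maxMatching := by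
  classical
  set S := {n | ∃ M : (G.induce (U ∪ W')).Subgraph, M.IsMatching ∧ M.edgeSet.ncard = n} with hS
  have hne : S.Nonempty := ⟨0, ⊥, by
    constructor
    · intro v hv; simp [SimpleGraph.Subgraph.verts_bot] at hv
    · simp [SimpleGraph.Subgraph.edgeSet_bot]⟩
  have hbdd : BddAbove S := by
    refine ⟨Nat.card (Sym2 ↥(U ∪ W')), ?_⟩
    rintro n ⟨N, -, rfl⟩
    have := Set.ncard_le_ncard (Set.subset_univ N.edgeSet) Set.finite_univ
    simpa [Set.ncard_univ] using this
  obtain ⟨M, hM, hMcard⟩ := Nat.sSup_mem hne hbdd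
  have key : ∀ e ∈ M.edgeSet, ∀ a : ↥(U ∪ W'), a ∈ e → ∃ o, M.Adj a o ∧ e = s(a, o) := by
    intro e he a ha
    induction e using Sym2.ind with
    | _ x y =>
      rcases Sym2.mem_iff.mp ha with rfl | rfl
      · exact ⟨y, SimpleGraph.Subgraph.mem_edgeSet.mp he, rfl⟩
      · exact ⟨x, (SimpleGraph.Subgraph.mem_edgeSet.mp he).symm, Sym2.eq_swap⟩
  refine ⟨Sym2.map (Subtype.val) '' M.edgeSet, ?_, ?_, ?_⟩
  · rintro e ⟨e', he', rfl⟩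
    induction e' using Sym2.ind with
    | _ a b =>
      have hadj : (G.induce (U ∪ W')).Adj a b := M.adj_sub (SimpleGraph.Subgraph.mem_edgeSet.mp he')
      have hGadj : G.Adj ↑a ↑b := hadj
      rcases a.2 with haU | haW
      · rcases b.2 with hbU | hbW
        · exact absurd hGadj (hU _ haU _ hbU)
        · exact ⟨a, b, by simp, haU, hbW, hGadj⟩
      · rcases b.2 with hbU | hbW
        · exact ⟨b, a, by simp [Sym2.eq_swap], hbU, haW, hGadj.symm⟩
        · exact absurd hGadj (hW _ haW _ hbW)
  · rintro e ⟨e1, he1, rfl⟩ f ⟨e2, he2, rfl⟩ v hv1 hv2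
    obtain ⟨a1, ha1, hval1⟩ := Sym2.mem_map.mp hv1
    obtain ⟨a2, ha2, hval2⟩ := Sym2.mem_map.mp hv2
    have haa : a1 = a2 := Subtype.val_injective (by rw [hval1, hval2])
    subst haa
    obtain ⟨o1, ho1, he1'⟩ := key _ he1 _ ha1
    obtain ⟨o2, ho2, he2'⟩ := key _ he2 _ ha2
    have : o1 = o2 := (hM (M.edge_vert ho1)).unique ho1 ho2
    rw [he1', he2', this]
  · rw [Set.ncard_image_of_injOn (Sym2.map.injective Subtype.val_injective).injOn, hMcard]
    rfl

private lemma aux_step {V : Type*} {G : SimpleGraph V} (U W' : Set V) (w : V)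
    (hW : ∀ a ∈ W', ∀ b ∈ W', ¬G.Adj a b)
    (hWw : ∀ b ∈ W', ¬G.Adj b w) (hwW : w ∉ W') (hwU : w ∉ U)
    {v : V} (hv : v ∈ W') (q : G.Walk v w)
    (hq : ∀ x ∈ q.support, x ∈ U ∪ W' ∪ {w}) :
    ∃ a b, a ∈ U ∧ b ∈ W' ∧ G.Adj a b ∧ a ∈ q.support ∧ b ∈ q.support := by
  cases q with
  | nil => exact absurd hv hwW
  | cons h q' =>
    rename_i v1
    have hv1 : v1 ∈ U ∪ W' ∪ {w} := hq _ (by simp)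
    rcases hv1 with (h1 | h1) | h1
    · exact ⟨v1, v, h1, hv, h.symm, by simp, by simp⟩
    · exact absurd h (hW _ hv _ h1)
    · rw [Set.mem_singleton_iff] at h1
      subst h1
      exact absurd h (hWw _ hv)

private lemma aux_eq_of_support_pair {V : Type*} {G : SimpleGraph V} {u w : V}
    (p : G.Walk u w) (hp : p.support = [u, w]) (q : G.Walk u w) (hq : q.support = [u, w]) :
    p = q := by
  have main : ∀ (r : G.Walk u w) (h0 : G.Adj u w), r.support = [u, w] →
      r = SimpleGraph.Walk.cons h0 SimpleGraph.Walk.nil := by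
    intro r h0 hr
    cases r with
    | nil => simp at hr
    | cons h r' =>
      rename_i v1
      rw [SimpleGraph.Walk.support_cons] at hr
      have hr' : r'.support = [w] := by
        simpa using hr
      have hv1 : v1 = w := by
        have := r'.support_eq_cons
        rw [hr'] at this
        exact (List.cons.injEq _ _ _ _ ▸ this : _) |>.1.symm
      subst hv1
      cases r' with
      | nil => rfl
      | cons h'' r'' =>
        rw [SimpleGraph.Walk.support_cons] at hr'
        simp at hr'
  have h0 : G.Adj u w := by
    cases p with
    | nil => simp at hp
    | cons h p' =>
      rename_i v1
      rw [SimpleGraph.Walk.support_cons] at hp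
      have hp' : p'.support = [w] := by simpa using hp
      have hv1 : v1 = w := by
        have := p'.support_eq_cons
        rw [hp'] at this
        exact (List.cons.injEq _ _ _ _ ▸ this : _) |>.1.symm
      subst hv1
      exact h
  rw [main p h0 hp, main q h0 hq]

private lemma aux_classify {V : Type*} {G : SimpleGraph V} {u w : V} (U W' : Set V)
    (hW : ∀ a ∈ W', ∀ b ∈ W', ¬G.Adj a b)
    (huU : ∀ a ∈ U, ¬G.Adj u a) (hWw : ∀ b ∈ W', ¬G.Adj b w)
    (hwW : w ∉ W') (hwU : w ∉ U) (hne : u ≠ w)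
    (p : G.Walk u w) (hp : p.IsPath) :
    p.support = [u, w] ∨
    (∃ x, x ∉ U ∪ W' ∪ {u, w} ∧ x ∈ p.support) ∨
    (∃ a b, a ∈ U ∧ b ∈ W' ∧ G.Adj a b ∧ a ∈ p.support ∧ b ∈ p.support) := by
  by_cases hX : ∃ x ∈ p.support, x ∉ U ∪ W' ∪ ({u, w} : Set V)
  · obtain ⟨x, hxs, hx⟩ := hX
    exact Or.inr (Or.inl ⟨x, hx, hxs⟩)
  push_neg at hX
  cases p with
  | nil => exact absurd rfl hne
  | cons h q =>
    rename_i v1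
    have huq : u ∉ q.support := ((SimpleGraph.Walk.cons_isPath_iff h q).mp hp).2
    have hv1 : v1 ∈ U ∪ W' ∪ ({u, w} : Set V) := hX _ (by simp)
    rcases hv1 with (h1 | h1) | h1
    · exact absurd h (huU _ h1)
    · -- v1 ∈ W'
      have hq' : ∀ x ∈ q.support, x ∈ U ∪ W' ∪ {w} := by
        intro x hx
        rcases hX x (by simp [hx]) with (hh | hh) | hh
        · exact Or.inl (Or.inl hh)
        · exact Or.inl (Or.inr hh)
        · rcases hh with rfl | rfl
          · exact absurd hx huq
          · exact Or.inr rfl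
      obtain ⟨a, b, ha, hb, hab, has, hbs⟩ := aux_step U W' w hW hWw hwW hwU h1 q hq'
      exact Or.inr (Or.inr ⟨a, b, ha, hb, hab, by simp [has], by simp [hbs]⟩)
    · rcases h1 with h1 | h1
      · exact absurd (h1 ▸ h) (G.irrefl)
      · rw [Set.mem_singleton_iff] at h1
        subst h1
        have hq0 : q = SimpleGraph.Walk.nil := SimpleGraph.Walk.isPath_iff_eq_nil.mp hp.of_cons
        subst hq0
        left; simp

/-- Let `G` be a co-chordal graph whose complement is connected with diameter `d ≥ 3`,
let `u`, `w` be simplicial vertices of the complement at distance `d`, let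
`U = N_{Ḡ}(u)`, `W = N_{Ḡ}(w)`, `X = V(G) \ (U ∪ W ∪ {u,w})`, and let `m` be the
maximum size of a matching in `G[U ∪ W]`. Then `κ_G(u,w) = |X| + m + 1`. -/
theorem stmt_18 {V : Type*} [Fintype V] (G : SimpleGraph V)
    (hchordal : (Gᶜ).IsChordal) (hconn : (Gᶜ).Connected)
    (d : ℕ) (hd : 3 ≤ d) (hdiam : (Gᶜ).ediam = (d : ℕ∞))
    (u w : V) (hu : (Gᶜ).IsClique ((Gᶜ).neighborSet u))
    (hw : (Gᶜ).IsClique ((Gᶜ).neighborSet w))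
    (hdist : (Gᶜ).dist u w = d) :
    G.localConnectivity u w =
      (((Gᶜ).neighborSet u ∪ (Gᶜ).neighborSet w ∪ {u, w})ᶜ : Set V).ncard +
        (G.induce ((Gᶜ).neighborSet u ∪ (Gᶜ).neighborSet w)).maxMatching + 1 := by
  classical
  set U : Set V := (Gᶜ).neighborSet u with hUdef
  set W' : Set V := (Gᶜ).neighborSet w with hWdef
  set Xc : Set V := (U ∪ W' ∪ {u, w})ᶜ with hXdef
  set m : ℕ := (G.induce (U ∪ W')).maxMatching with hmdef
  have hd3 : 3 ≤ (Gᶜ).dist u w := by rw [hdist]; exact hd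
  have hne : u ≠ w := by
    rintro rfl; rw [SimpleGraph.dist_self] at hd3; omega
  have hnadj : ¬(Gᶜ).Adj u w := by
    intro h
    have h1 : (Gᶜ).dist u w = 1 := SimpleGraph.dist_eq_one_iff_adj.mpr h
    omega
  have hGuw : G.Adj u w := by
    by_contra hc
    exact hnadj ((G.compl_adj u w).mpr ⟨hne, hc⟩)
  have hdisjUW : ∀ x, x ∈ U → x ∈ W' → False := by
    intro x hxU hxW
    have hxU' : (Gᶜ).Adj u x := hxU
    have hxW' : (Gᶜ).Adj w x := hxW
    have h1 : (Gᶜ).dist u x = 1 := SimpleGraph.dist_eq_one_iff_adj.mpr hxU'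
    have h2 : (Gᶜ).dist x w = 1 := SimpleGraph.dist_eq_one_iff_adj.mpr hxW'.symm
    have h3 := hconn.dist_triangle (u := u) (v := x) (w := w)
    omega
  have huU : u ∉ U := fun h => (Gᶜ).irrefl h
  have hwW : w ∉ W' := fun h => (Gᶜ).irrefl h
  have hwU : w ∉ U := fun h => hnadj h
  have huW : u ∉ W' := fun h => hnadj (SimpleGraph.Adj.symm h)
  have hUind : ∀ a ∈ U, ∀ b ∈ U, ¬G.Adj a b := by
    intro a ha b hb hab
    exact ((G.compl_adj a b).mp (hu ha hb hab.ne)).2 hab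
  have hWind : ∀ a ∈ W', ∀ b ∈ W', ¬G.Adj a b := by
    intro a ha b hb hab
    exact ((G.compl_adj a b).mp (hw ha hb hab.ne)).2 hab
  have huUadj : ∀ a ∈ U, ¬G.Adj u a := fun a ha => ((G.compl_adj u a).mp ha).2
  have hWwadj : ∀ b ∈ W', ¬G.Adj b w := fun b hb h => ((G.compl_adj w b).mp hb).2 h.symm
  have hadj_of_notU : ∀ x, x ≠ u → x ∉ U → G.Adj u x := by
    intro x hxu hxU
    by_contra hc
    exact hxU ((G.compl_adj u x).mpr ⟨Ne.symm hxu, hc⟩)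
  have hadj_of_notW : ∀ x, x ≠ w → x ∉ W' → G.Adj x w := by
    intro x hxw hxW
    by_contra hc
    exact hxW ((G.compl_adj w x).mpr ⟨Ne.symm hxw, fun h => hc h.symm⟩)
  have hXc : ∀ x ∈ Xc, x ∉ U ∧ x ∉ W' ∧ x ≠ u ∧ x ≠ w := by
    intro x hx
    rw [hXdef, Set.mem_compl_iff] at hx
    simp only [Set.mem_union, Set.mem_insert_iff, Set.mem_singleton_iff, not_or] at hx
    exact ⟨hx.1.1, hx.1.2, hx.2.1, hx.2.2⟩
  have hXadj : ∀ x ∈ Xc, G.Adj u x ∧ G.Adj x w := by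
    intro x hx
    obtain ⟨h1, h2, h3, h4⟩ := hXc x hx
    exact ⟨hadj_of_notU x h3 h1, hadj_of_notW x h4 h2⟩
  have hWuadj : ∀ b ∈ W', G.Adj u b := fun b hb =>
    hadj_of_notU b (fun h => huW (h ▸ hb)) (fun h => hdisjUW b h hb)
  have hUwadj : ∀ a ∈ U, G.Adj a w := fun a ha =>
    hadj_of_notW a (fun h => hwU (h ▸ ha)) (fun h => hdisjUW a ha h)
  obtain ⟨E, hE, hdisjE, hEcard⟩ := aux_exists_abstract G U W' hUind hWind
  have hNE : Nonempty V := ⟨u⟩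
  choose! A B hsAB hAU hBW hABadj using hE
  -- the paths
  have hp0path : (SimpleGraph.Walk.cons hGuw SimpleGraph.Walk.nil).IsPath := by
    simp [SimpleGraph.Walk.cons_isPath_iff, hne]
  let p0 : G.Path u w := ⟨SimpleGraph.Walk.cons hGuw SimpleGraph.Walk.nil, hp0path⟩
  let f1 : V → G.Path u w := fun x =>
    if hx : x ∈ Xc then
      ⟨SimpleGraph.Walk.cons (hXadj x hx).1
        (SimpleGraph.Walk.cons (hXadj x hx).2 SimpleGraph.Walk.nil), by
        obtain ⟨h1, h2, h3, h4⟩ := hXc x hx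
        simp [SimpleGraph.Walk.cons_isPath_iff, hne, h4, Ne.symm h3]⟩
    else p0
  let f2 : Sym2 V → G.Path u w := fun e =>
    if he : e ∈ E then
      ⟨SimpleGraph.Walk.cons (hWuadj _ (hBW e he))
        (SimpleGraph.Walk.cons (hABadj e he).symm
          (SimpleGraph.Walk.cons (hUwadj _ (hAU e he)) SimpleGraph.Walk.nil)), by
        have hA := hAU e he
        have hB := hBW e he
        have h1 : B e ≠ A e := (hABadj e he).ne'
        have h2 : A e ≠ w := fun h => hwU (h ▸ hA)
        have h3 : B e ≠ w := fun h => hwW (h ▸ hB)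
        have h4 : u ≠ B e := fun h => huW (h.symm ▸ hB)
        have h5 : u ≠ A e := fun h => huU (h.symm ▸ hA)
        simp [SimpleGraph.Walk.cons_isPath_iff, hne, h1, h2, h3, h4, h5]⟩
    else p0
  have hs0 : (p0 : G.Walk u w).support = [u, w] := by simp [p0]
  have hs1 : ∀ x ∈ Xc, (f1 x : G.Walk u w).support = [u, x, w] := by
    intro x hx; simp [f1, dif_pos hx]
  have hs2 : ∀ e ∈ E, (f2 e : G.Walk u w).support = [u, B e, A e, w] := by
    intro e he; simp [f2, dif_pos he]
  set P : Set (G.Path u w) := ({p0} : Set (G.Path u w)) ∪ f1 '' Xc ∪ f2 '' E with hPdef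
  have hkey : ∀ p ∈ P, ∀ v ∈ (p : G.Walk u w).support,
      v = u ∨ v = w ∨ (v ∈ Xc ∧ p = f1 v) ∨ (∃ e ∈ E, (v = A e ∨ v = B e) ∧ p = f2 e) := by
    rintro p ((hp | ⟨x, hx, rfl⟩) | ⟨e, he, rfl⟩) v hv
    · rw [Set.mem_singleton_iff] at hp
      subst hp
      rw [hs0] at hv
      simp only [List.mem_cons, List.mem_singleton, List.not_mem_nil, or_false] at hv
      tauto
    · rw [hs1 x hx] at hv
      simp only [List.mem_cons, List.not_mem_nil, or_false] at hv
      rcases hv with rfl | rfl | rfl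
      · exact Or.inl rfl
      · exact Or.inr (Or.inr (Or.inl ⟨hx, rfl⟩))
      · exact Or.inr (Or.inl rfl)
    · rw [hs2 e he] at hv
      simp only [List.mem_cons, List.not_mem_nil, or_false] at hv
      rcases hv with rfl | rfl | rfl | rfl
      · exact Or.inl rfl
      · exact Or.inr (Or.inr (Or.inr ⟨e, he, Or.inr rfl, rfl⟩))
      · exact Or.inr (Or.inr (Or.inr ⟨e, he, Or.inl rfl, rfl⟩))
      · exact Or.inr (Or.inl rfl)
  have hpair : P.Pairwise fun p q =>
      SimpleGraph.InternallyDisjoint (p : G.Walk u w) (q : G.Walk u w) := by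
    intro p hp q hq hpq v hvp hvq
    rcases hkey p hp v hvp with h | h | ⟨hvX, rfl⟩ | ⟨e, he, hve, rfl⟩
    · exact Or.inl h
    · exact Or.inr h
    · rcases hkey q hq v hvq with h' | h' | ⟨hvX', h'⟩ | ⟨e', he', hve', h'⟩
      · exact Or.inl h'
      · exact Or.inr h'
      · exact absurd h'.symm hpq
      · rcases hve' with rfl | rfl
        · exact absurd (hAU e' he') (hXc _ hvX).1
        · exact absurd (hBW e' he') (hXc _ hvX).2.1
    · rcases hkey q hq v hvq with h' | h' | ⟨hvX', h'⟩ | ⟨e', he', hve', h'⟩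
      · exact Or.inl h'
      · exact Or.inr h'
      · rcases hve with rfl | rfl
        · exact absurd (hAU e he) (hXc _ hvX').1
        · exact absurd (hBW e he) (hXc _ hvX').2.1
      · have hv1 : v ∈ e := by
          rw [hsAB e he]
          rcases hve with rfl | rfl
          · exact Sym2.mem_mk_left _ _
          · exact Sym2.mem_mk_right _ _
        have hv2 : v ∈ e' := by
          rw [hsAB e' he']
          rcases hve' with rfl | rfl
          · exact Sym2.mem_mk_left _ _
          · exact Sym2.mem_mk_right _ _
        have hee : e = e' := hdisjE e he e' he' v hv1 hv2
        subst hee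
        exact absurd h'.symm hpq
  have hinj1 : Set.InjOn f1 Xc := by
    intro x hx y hy hxy
    have h2 : ([u, x, w] : List V) = [u, y, w] := by
      rw [← hs1 x hx, ← hs1 y hy, hxy]
    simpa using h2
  have hinj2 : Set.InjOn f2 E := by
    intro e he e' he' hee
    have h2 : ([u, B e, A e, w] : List V) = [u, B e', A e', w] := by
      rw [← hs2 e he, ← hs2 e' he', hee]
    simp only [List.cons.injEq, and_true, true_and] at h2
    rw [hsAB e he, hsAB e' he', h2.1, h2.2]
  have hd01 : Disjoint ({p0} : Set (G.Path u w)) (f1 '' Xc) := by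
    rw [Set.disjoint_left]
    rintro p hp ⟨x, hx, rfl⟩
    rw [Set.mem_singleton_iff] at hp
    have h2 : ([u, x, w] : List V) = [u, w] := by rw [← hs1 x hx, ← hs0, hp]
    have := congrArg List.length h2
    simp at this
  have hd02 : Disjoint ({p0} : Set (G.Path u w)) (f2 '' E) := by
    rw [Set.disjoint_left]
    rintro p hp ⟨e, he, rfl⟩
    rw [Set.mem_singleton_iff] at hp
    have h2 : ([u, B e, A e, w] : List V) = [u, w] := by rw [← hs2 e he, ← hs0, hp]
    have := congrArg List.length h2
    simp at this
  have hd12 : Disjoint (f1 '' Xc) (f2 '' E) := by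
    rw [Set.disjoint_left]
    rintro p ⟨x, hx, rfl⟩ ⟨e, he, hpe⟩
    have h2 : ([u, B e, A e, w] : List V) = [u, x, w] := by rw [← hs2 e he, ← hs1 x hx, hpe]
    have := congrArg List.length h2
    simp at this
  have hPcard : P.ncard = 1 + Xc.ncard + m := by
    rw [hPdef, Set.ncard_union_eq (Set.disjoint_union_left.mpr ⟨hd02, hd12⟩)
        (Set.toFinite _) (Set.toFinite _),
      Set.ncard_union_eq hd01 (Set.toFinite _) (Set.toFinite _),
      Set.ncard_singleton, Set.ncard_image_of_injOn hinj1, Set.ncard_image_of_injOn hinj2,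
      hEcard]
  have hmem : Xc.ncard + m + 1 ∈ {n | ∃ P : Set (G.Path u w), P.ncard = n ∧
      P.Pairwise fun p q =>
        SimpleGraph.InternallyDisjoint (p : G.Walk u w) (q : G.Walk u w)} := by
    exact ⟨P, by rw [hPcard]; omega, hpair⟩
  have hub : ∀ n ∈ {n | ∃ P : Set (G.Path u w), P.ncard = n ∧
      P.Pairwise fun p q =>
        SimpleGraph.InternallyDisjoint (p : G.Walk u w) (q : G.Walk u w)},
      n ≤ Xc.ncard + m + 1 := by
    rintro n ⟨Q, hQcard, hQpair⟩
    set Q0 : Set (G.Path u w) := {p ∈ Q | (p : G.Walk u w).support = [u, w]} with hQ0def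
    set Q1 : Set (G.Path u w) := {p ∈ Q | (p : G.Walk u w).support ≠ [u, w] ∧
      ∃ x ∈ Xc, x ∈ (p : G.Walk u w).support} with hQ1def
    set Q2 : Set (G.Path u w) := {p ∈ Q | (p : G.Walk u w).support ≠ [u, w] ∧
      ¬∃ x ∈ Xc, x ∈ (p : G.Walk u w).support} with hQ2def
    have hunion : Q = Q0 ∪ Q1 ∪ Q2 := by
      ext p
      constructor
      · intro hp
        by_cases h1 : (p : G.Walk u w).support = [u, w]
        · exact Or.inl (Or.inl ⟨hp, h1⟩)
        by_cases h2 : ∃ x ∈ Xc, x ∈ (p : G.Walk u w).support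
        · exact Or.inl (Or.inr ⟨hp, h1, h2⟩)
        · exact Or.inr ⟨hp, h1, h2⟩
      · rintro ((⟨hp, -⟩ | ⟨hp, -⟩) | ⟨hp, -⟩) <;> exact hp
    have hdisj1 : Disjoint Q0 Q1 := by
      rw [Set.disjoint_left]
      rintro p ⟨_, h1⟩ ⟨_, h2, _⟩
      exact h2 h1
    have hdisj2 : Disjoint (Q0 ∪ Q1) Q2 := by
      rw [Set.disjoint_left]
      rintro p (⟨_, h1⟩ | ⟨_, _, h1⟩) ⟨_, h2, h3⟩
      · exact h2 h1
      · exact h3 h1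
    have hQ0card : Q0.ncard ≤ 1 := by
      have hsub : Q0 ⊆ {p0} := by
        rintro p ⟨_, hps⟩
        rw [Set.mem_singleton_iff]
        exact Subtype.ext (aux_eq_of_support_pair (p : G.Walk u w) hps (p0 : G.Walk u w) hs0)
      simpa using Set.ncard_le_ncard hsub (Set.toFinite _)
    have hQ1card : Q1.ncard ≤ Xc.ncard := by
      have hch : ∀ p ∈ Q1, ∃ x, x ∈ Xc ∧ x ∈ (p : G.Walk u w).support := by
        rintro p ⟨_, _, x, hx1, hx2⟩
        exact ⟨x, hx1, hx2⟩
      choose! g hg1 hg2 using hch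
      have hinj : Set.InjOn g Q1 := by
        intro p hp q hq hgpq
        by_contra hne'
        have hmem2 : g p ∈ (q : G.Walk u w).support := hgpq ▸ hg2 q hq
        rcases hQpair hp.1 hq.1 hne' (g p) (hg2 p hp) hmem2 with h | h
        · exact (hXc _ (hg1 p hp)).2.2.1 h
        · exact (hXc _ (hg1 p hp)).2.2.2 h
      calc Q1.ncard = (g '' Q1).ncard := (Set.ncard_image_of_injOn hinj).symm
        _ ≤ Xc.ncard := Set.ncard_le_ncard
            (by rintro y ⟨p, hp, rfl⟩; exact hg1 p hp) (Set.toFinite _)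
    have hQ2card : Q2.ncard ≤ m := by
      have hch2 : ∀ p ∈ Q2, ∃ a b, a ∈ U ∧ b ∈ W' ∧ G.Adj a b ∧
          a ∈ (p : G.Walk u w).support ∧ b ∈ (p : G.Walk u w).support := by
        rintro p ⟨hpQ, hp1, hp2⟩
        rcases aux_classify U W' hWind huUadj hWwadj hwW hwU hne
            (p : G.Walk u w) p.2 with h | h | h
        · exact absurd h hp1
        · obtain ⟨x, hx1, hx2⟩ := h
          exact absurd ⟨x, hx1, hx2⟩ hp2
        · exact h
      choose! a b haU hbW habadj has hbs using hch2
      have hkey2 : ∀ p ∈ Q2, ∀ q ∈ Q2, ∀ v, (v = a p ∨ v = b p) → (v = a q ∨ v = b q) →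
          p = q := by
        intro p hp q hq v h1 h2
        by_contra hne'
        have hv1 : v ∈ (p : G.Walk u w).support := by
          rcases h1 with rfl | rfl
          · exact has p hp
          · exact hbs p hp
        have hv2 : v ∈ (q : G.Walk u w).support := by
          rcases h2 with rfl | rfl
          · exact has q hq
          · exact hbs q hq
        have hvUW : v ∈ U ∨ v ∈ W' := by
          rcases h1 with rfl | rfl
          · exact Or.inl (haU p hp)
          · exact Or.inr (hbW p hp)
        rcases hQpair hp.1 hq.1 hne' v hv1 hv2 with rfl | rfl
        · rcases hvUW with h | h
          · exact huU h
          · exact huW h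
        · rcases hvUW with h | h
          · exact hwU h
          · exact hwW h
      have hinj2' : Set.InjOn (fun p => s(a p, b p)) Q2 := by
        intro p hp q hq hpq
        refine hkey2 p hp q hq (a p) (Or.inl rfl) ?_
        have hpq' : s(a p, b p) = s(a q, b q) := hpq
        have h3 : a p ∈ s(a q, b q) := by
          rw [← hpq']; exact Sym2.mem_mk_left _ _
        simpa using h3
      have hle := aux_ncard_le_maxMatching G (U ∪ W') ((fun p => s(a p, b p)) '' Q2)
        (by
          rintro e ⟨p, hp, rfl⟩
          exact ⟨a p, b p, rfl, Or.inl (haU p hp), Or.inr (hbW p hp), habadj p hp⟩)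
        (by
          rintro e ⟨p, hp, rfl⟩ f ⟨q, hq, rfl⟩ v hv1 hv2
          simp only [Sym2.mem_iff] at hv1 hv2
          exact congrArg (fun p => s(a p, b p)) (hkey2 p hp q hq v hv1 hv2))
      calc Q2.ncard = ((fun p => s(a p, b p)) '' Q2).ncard :=
            (Set.ncard_image_of_injOn hinj2').symm
        _ ≤ m := hle
    have hQtotal : Q.ncard = Q0.ncard + Q1.ncard + Q2.ncard := by
      rw [hunion, Set.ncard_union_eq hdisj2 (Set.toFinite _) (Set.toFinite _),
        Set.ncard_union_eq hdisj1 (Set.toFinite _) (Set.toFinite _)]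
    omega
  rw [SimpleGraph.localConnectivity]
  exact le_antisymm (csSup_le ⟨_, hmem⟩ hub) (le_csSup ⟨_, fun n hn => hub n hn⟩ hmem)
end
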